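/- Let {𝒜_k}_{k≥1} be a sequence of labyrinth patterns with widths m_k ≥ 3, and let n ≥ 1. Then from every black square of level n there is a path in the graph 𝒢(ℬ_n) to a black border square of level n. -/

import Mathlib

open Set

namespace Labyrinth

/-- The closed square `S_{i,j,m} = [i/m,(i+1)/m] × [j/m,(j+1)/m]` of the `m × m` grid
on the unit square, indexed by `p = (i,j)`. -/
def cell (m : ℕ) (p : ℕ × ℕ) : Set (ℝ × ℝ) :=
  Icc ((p.1 : ℝ) / (m : ℝ)) (((p.1 : ℝ) + 1) / (m : ℝ)) ×ˢ
    Icc ((p.2 : ℝ) / (m : ℝ)) (((p.2 : ℝ) + 1) / (m : ℝ))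

/-- An `m`-pattern: a nonempty set of grid indices within the `m × m` grid. -/
def IsPattern (m : ℕ) (A : Set (ℕ × ℕ)) : Prop :=
  A.Nonempty ∧ ∀ p ∈ A, p.1 < m ∧ p.2 < m

/-- Two grid squares share a side. -/
def SideAdj (p q : ℕ × ℕ) : Prop :=
  (p.1 = q.1 ∧ (p.2 + 1 = q.2 ∨ q.2 + 1 = p.2)) ∨
  (p.2 = q.2 ∧ (p.1 + 1 = q.1 ∨ q.1 + 1 = p.1))

/-- Two grid squares share a side or a corner. -/
def CornerAdj (p q : ℕ × ℕ) : Prop :=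
  SideAdj p q ∨
  ((p.1 + 1 = q.1 ∨ q.1 + 1 = p.1) ∧ (p.2 + 1 = q.2 ∨ q.2 + 1 = p.2))

/-- The graph `𝒢(𝒜)` of a pattern: vertices are its squares, two squares being
adjacent iff they share a side. -/
def patternGraph (A : Set (ℕ × ℕ)) : SimpleGraph ↥A where
  Adj p q := SideAdj p.1 q.1
  symm := by
    constructor
    rintro ⟨p, hp⟩ ⟨q, hq⟩ h
    rcases h with ⟨h1, h2⟩ | ⟨h1, h2⟩
    · exact Or.inl ⟨h1.symm, h2.symm⟩
    · exact Or.inr ⟨h1.symm, h2.symm⟩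
  loopless := by
    constructor
    rintro ⟨p, hp⟩ h
    rcases h with ⟨h1, h2 | h2⟩ | ⟨h1, h2 | h2⟩ <;> omega

/-- The four sides of a square/pattern. -/
inductive Side | top | bottom | left | right
deriving DecidableEq

/-- `p` is an exit square of the `m`-pattern `A` on the given side. -/
def IsExitSq (m : ℕ) (A : Set (ℕ × ℕ)) : Side → ℕ × ℕ → Prop
  | .top, p => p ∈ A ∧ p.2 = m - 1 ∧ (p.1, 0) ∈ A
  | .bottom, p => p ∈ A ∧ p.2 = 0 ∧ (p.1, m - 1) ∈ A
  | .left, p => p ∈ A ∧ p.1 = 0 ∧ (m - 1, p.2) ∈ A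
  | .right, p => p ∈ A ∧ p.1 = m - 1 ∧ (0, p.2) ∈ A

/-- An `m × m`-labyrinth pattern: a nonempty `m`-pattern, `m ≥ 3`, whose graph is a tree,
with exactly one vertical and exactly one horizontal exit pair, and no two white squares
at diagonally opposite corners. -/
def IsLabyrinthPattern (m : ℕ) (A : Set (ℕ × ℕ)) : Prop :=
  3 ≤ m ∧ IsPattern m A ∧ (patternGraph A).IsTree ∧
    (∃! i : ℕ, (i, m - 1) ∈ A ∧ (i, 0) ∈ A) ∧
    (∃! j : ℕ, (0, j) ∈ A ∧ (m - 1, j) ∈ A) ∧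
    ((0, 0) ∈ A → (m - 1, m - 1) ∉ A) ∧
    ((m - 1, 0) ∈ A → (0, m - 1) ∉ A)

/-- A wild labyrinth pattern: the graph is merely connected, and there is at least one
vertical and at least one horizontal exit pair. -/
def IsWildLabyrinthPattern (m : ℕ) (A : Set (ℕ × ℕ)) : Prop :=
  3 ≤ m ∧ IsPattern m A ∧ (patternGraph A).Connected ∧
    (∃ i : ℕ, (i, m - 1) ∈ A ∧ (i, 0) ∈ A) ∧
    (∃ j : ℕ, (0, j) ∈ A ∧ (m - 1, j) ∈ A) ∧
    ((0, 0) ∈ A → (m - 1, m - 1) ∉ A) ∧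
    ((m - 1, 0) ∈ A → (0, m - 1) ∉ A)

/-- One substitution step: place a copy of the pattern `A'` (of width `m'`) into each
white square of `W`. -/
def subst (m' : ℕ) (A' W : Set (ℕ × ℕ)) : Set (ℕ × ℕ) :=
  {q | ∃ p ∈ W, ∃ r ∈ A', q = (p.1 * m' + r.1, p.2 * m' + r.2)}

/-- The white squares `𝒲_n` of level `n`; `whites m A n` is the paper's `𝒲_n`, where
`A k` is the paper's pattern `𝒜_{k+1}` of width `m k = m_{k+1}`; level `0` is the whole
unit square. -/
def whites (m : ℕ → ℕ) (A : ℕ → Set (ℕ × ℕ)) : ℕ → Set (ℕ × ℕ)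
  | 0 => {(0, 0)}
  | n + 1 => subst (m n) (A n) (whites m A n)

/-- `m(n) = m_1 ⋯ m_n`. -/
def mProd (m : ℕ → ℕ) (n : ℕ) : ℕ := ∏ k ∈ Finset.range n, m k

/-- The black squares `ℬ_n` of level `n`. -/
def blacks (m : ℕ → ℕ) (A : ℕ → Set (ℕ × ℕ)) (n : ℕ) : Set (ℕ × ℕ) :=
  {p : ℕ × ℕ | p.1 < mProd m n ∧ p.2 < mProd m n} \ whites m A n

/-- A border square of the `m × m` grid. -/
def IsBorder (m : ℕ) (p : ℕ × ℕ) : Prop :=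
  p.1 = 0 ∨ p.2 = 0 ∨ p.1 = m - 1 ∨ p.2 = m - 1

/-- `L_n`, the union of the white squares of level `n`. -/
def levelSet (m : ℕ → ℕ) (A : ℕ → Set (ℕ × ℕ)) (n : ℕ) : Set (ℝ × ℝ) :=
  ⋃ p ∈ whites m A n, cell (mProd m n) p

/-- `L_∞ = ⋂_{n ≥ 1} L_n` (the term `n = 0` is the whole unit square). -/
def limitSet (m : ℕ → ℕ) (A : ℕ → Set (ℕ × ℕ)) : Set (ℝ × ℝ) :=
  ⋂ n, levelSet m A n

def unitSquare : Set (ℝ × ℝ) := Icc (0 : ℝ) 1 ×ˢ Icc (0 : ℝ) 1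

/-- A path in a graph (with adjacency `Adj`, within the vertex set `A`)
from `u` to `v`: a nonempty list of distinct, consecutively adjacent squares of `A`,
starting at `u` and ending at `v`. -/
def IsPathIn (Adj : ℕ × ℕ → ℕ × ℕ → Prop) (A : Set (ℕ × ℕ))
    (l : List (ℕ × ℕ)) (u v : ℕ × ℕ) : Prop :=
  l ≠ [] ∧ l.Nodup ∧ l.Chain' Adj ∧ (∀ p ∈ l, p ∈ A) ∧
    l.head? = some u ∧ l.getLast? = some v

/-- `s` is an arc between `a` and `b`: a homeomorphic image of `[0,1]`
with endpoints `a` and `b`. -/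
def IsArc (s : Set (ℝ × ℝ)) (a b : ℝ × ℝ) : Prop :=
  ∃ f : ℝ → ℝ × ℝ, ContinuousOn f (Icc 0 1) ∧ InjOn f (Icc 0 1) ∧
    f '' Icc 0 1 = s ∧ f 0 = a ∧ f 1 = b

/-- `e` is the exit point of `L_∞` of the given type: for every `n ≥ 1` it lies in the
exit square of that type of `𝒲_n`. -/
def IsExitPoint (m : ℕ → ℕ) (A : ℕ → Set (ℕ × ℕ)) (s : Side) (e : ℝ × ℝ) : Prop :=
  ∀ n, 1 ≤ n → ∃ p, IsExitSq (mProd m n) (whites m A n) s p ∧ e ∈ cell (mProd m n) p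

/-- The (closed) edge of the grid square `p` of the `m × m` grid on the given side. -/
def cellEdge (m : ℕ) (p : ℕ × ℕ) : Side → Set (ℝ × ℝ)
  | .top => Icc ((p.1 : ℝ) / (m : ℝ)) (((p.1 : ℝ) + 1) / (m : ℝ)) ×ˢ {((p.2 : ℝ) + 1) / (m : ℝ)}
  | .bottom => Icc ((p.1 : ℝ) / (m : ℝ)) (((p.1 : ℝ) + 1) / (m : ℝ)) ×ˢ {(p.2 : ℝ) / (m : ℝ)}
  | .left => {(p.1 : ℝ) / (m : ℝ)} ×ˢ Icc ((p.2 : ℝ) / (m : ℝ)) (((p.2 : ℝ) + 1) / (m : ℝ))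
  | .right => {((p.1 : ℝ) + 1) / (m : ℝ)} ×ˢ Icc ((p.2 : ℝ) / (m : ℝ)) (((p.2 : ℝ) + 1) / (m : ℝ))

/-- Directions in the grid. -/
inductive Dir | up | down | left | right
deriving DecidableEq

/-- `stepDir p q d`: the square `q` is the neighbour of `p` in direction `d`. -/
def stepDir (p q : ℕ × ℕ) : Dir → Prop
  | .up => q.1 = p.1 ∧ q.2 = p.2 + 1
  | .down => q.1 = p.1 ∧ p.2 = q.2 + 1
  | .left => q.2 = p.2 ∧ p.1 = q.1 + 1
  | .right => q.2 = p.2 ∧ q.1 = p.1 + 1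

/-- The outward direction through a given side. -/
def outDir : Side → Dir
  | .top => .up
  | .bottom => .down
  | .left => .left
  | .right => .right

def sideOfDir : Dir → Side
  | .up => .top
  | .down => .bottom
  | .left => .left
  | .right => .right

/-- The six types `A, B, C, D, E, F` of paths (and of squares within a path). -/
inductive PTy | A | B | C | D | E | F
deriving DecidableEq

instance instFintypePTy : Fintype PTy :=
  ⟨{.A, .B, .C, .D, .E, .F}, by intro x; cases x <;> simp⟩

/-- The exit at which the `x`-path starts: `A`: top→bottom, `B`: left→right,
`C`: top→right, `D`: right→bottom, `E`: bottom→left, `F`: left→top. -/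
def startSide : PTy → Side
  | .A => .top
  | .B => .left
  | .C => .top
  | .D => .right
  | .E => .bottom
  | .F => .left

/-- The exit at which the `x`-path ends. -/
def endSide : PTy → Side
  | .A => .bottom
  | .B => .right
  | .C => .right
  | .D => .bottom
  | .E => .left
  | .F => .top

/-- The two neighbour directions characterising a square of each type. -/
def ptyDirPair : PTy → Dir × Dir
  | .A => (.up, .down)
  | .B => (.left, .right)
  | .C => (.up, .right)
  | .D => (.right, .down)
  | .E => (.down, .left)
  | .F => (.left, .up)

def ptyDirs (τ : PTy) : Set Dir := {(ptyDirPair τ).1, (ptyDirPair τ).2}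

/-- The set of directions from the `i`-th square of the path `l` towards its neighbours
within the path, where the first and last squares (exit squares) are regarded as having
an additional neighbour outside the unit square, in directions `dstart`, `dend`
respectively. -/
def pathDirs (l : List (ℕ × ℕ)) (dstart dend : Dir) (i : ℕ) : Set Dir :=
  {d | (∃ p q, l[i]? = some p ∧ l[i - 1]? = some q ∧ 0 < i ∧ stepDir p q d)
    ∨ (∃ p q, l[i]? = some p ∧ l[i + 1]? = some q ∧ stepDir p q d)
    ∨ (i = 0 ∧ d = dstart)
    ∨ (i + 1 = l.length ∧ d = dend)}

/-- The number of `τ`-squares of the path `l` (with outward exit directions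
`dstart`, `dend`). -/
noncomputable def countTy (l : List (ℕ × ℕ)) (dstart dend : Dir) (τ : PTy) : ℕ :=
  {i | i < l.length ∧ pathDirs l dstart dend i = ptyDirs τ}.ncard

/-- `M(n) = M_1 ⋅ M_2 ⋅ ⋯ ⋅ M_n`. -/
def matProd (M : ℕ → Matrix PTy PTy ℕ) (n : ℕ) : Matrix PTy PTy ℕ :=
  ((List.range n).map M).prod

/-- A simple closed curve: a subspace homeomorphic to the circle. -/
def IsSimpleClosedCurve (s : Set (ℝ × ℝ)) : Prop :=
  Nonempty (↥s ≃ₜ AddCircle (1 : ℝ))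

/-- The number of `δ`-mesh squares meeting `E`. -/
noncomputable def meshCount (δ : ℝ) (E : Set (ℝ × ℝ)) : ℕ :=
  {q : ℤ × ℤ | (E ∩ (Icc ((q.1 : ℝ) * δ) (((q.1 : ℝ) + 1) * δ) ×ˢ
      Icc ((q.2 : ℝ) * δ) (((q.2 : ℝ) + 1) * δ))).Nonempty}.ncard

/-- The lower box-counting dimension of `E ⊆ ℝ²`. -/
noncomputable def lowerBoxDim (E : Set (ℝ × ℝ)) : ℝ :=
  Filter.liminf (fun δ : ℝ => Real.log (meshCount δ E) / (-Real.log δ)) (nhdsWithin 0 (Ioi 0))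

/-- The upper box-counting dimension of `E ⊆ ℝ²`. -/
noncomputable def upperBoxDim (E : Set (ℝ × ℝ)) : ℝ :=
  Filter.limsup (fun δ : ℝ => Real.log (meshCount δ E) / (-Real.log δ)) (nhdsWithin 0 (Ioi 0))


-- ===== auxiliary development for black_path_to_border =====
lemma cornerAdj_symm {p q : ℕ × ℕ} (h : CornerAdj p q) : CornerAdj q p := by
  unfold CornerAdj SideAdj at *; omega

def inGrid (M : ℕ) (p : ℕ × ℕ) : Prop := p.1 < M ∧ p.2 < M

def BG (M : ℕ) (W : Set (ℕ × ℕ)) : SimpleGraph (ℕ × ℕ) where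
  Adj p q := CornerAdj p q ∧ inGrid M p ∧ inGrid M q ∧ p ∉ W ∧ q ∉ W
  symm := ⟨fun p q h => ⟨cornerAdj_symm h.1, h.2.2.1, h.2.1, h.2.2.2.2, h.2.2.2.1⟩⟩
  loopless := by constructor; intro p h; have := h.1; unfold CornerAdj SideAdj at this; omega

def leafIn (S : Set (ℕ × ℕ)) (w : ℕ × ℕ) : Prop :=
  ∀ u ∈ S, ∀ v ∈ S, SideAdj w u → SideAdj w v → u = v

def Leafy (W : Set (ℕ × ℕ)) : Prop :=
  ∀ S : Finset (ℕ × ℕ), ↑S ⊆ W → S.Nonempty → ∃ w ∈ S, leafIn ↑S w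

lemma ring1 (M : ℕ) (W : Set (ℕ × ℕ)) (ℓ : ℕ × ℕ)
    (hgrid : inGrid M ℓ) (hb : ¬ IsBorder M ℓ)
    (hleaf : ∀ u ∈ W, ∀ v ∈ W, SideAdj ℓ u → SideAdj ℓ v → u = v)
    (q q' : ℕ × ℕ) (hq : q ∉ W) (hqg : inGrid M q) (hadj : CornerAdj q ℓ)
    (hq' : q' ∉ W) (hqg' : inGrid M q') (hadj' : CornerAdj q' ℓ) :
    (BG M W).Reachable q q' := by
  obtain ⟨l1, l2⟩ := ℓ
  have hg1 : l1 < M := hgrid.1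
  have hg2 : l2 < M := hgrid.2
  have hb' : ¬(l1 = 0 ∨ l2 = 0 ∨ l1 = M - 1 ∨ l2 = M - 1) := hb
  obtain ⟨i, rfl⟩ : ∃ i, l1 = i + 1 := ⟨l1 - 1, by omega⟩
  obtain ⟨j, rfl⟩ : ∃ j, l2 = j + 1 := ⟨l2 - 1, by omega⟩
  have hiM : i + 2 < M := by omega
  have hjM : j + 2 < M := by omega
  have hOne : ∀ u v : ℕ × ℕ, SideAdj (i+1, j+1) u → SideAdj (i+1, j+1) v →
      u ∈ W → v ∈ W → u = v := fun u v h1 h2 hu hv => hleaf u hu v hv h1 h2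
  have g : ∀ a b : ℕ, a ≤ i + 2 → b ≤ j + 2 → inGrid M (a, b) :=
    fun a b ha hb2 => ⟨by omega, by omega⟩
  have adj : ∀ a b : ℕ × ℕ, CornerAdj a b → inGrid M a → inGrid M b → a ∉ W → b ∉ W →
      (BG M W).Reachable a b := fun a b h g1 g2 n1 n2 =>
    SimpleGraph.Adj.reachable ⟨h, g1, g2, n1, n2⟩
  have rUR : ((i+1, j+2) : ℕ × ℕ) ∉ W → ((i+2, j+1) : ℕ × ℕ) ∉ W → (BG M W).Reachable ((i+1, j+2) : ℕ × ℕ) ((i+2, j+1) : ℕ × ℕ) := fun h1 h2 =>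
    adj ((i+1, j+2) : ℕ × ℕ) ((i+2, j+1) : ℕ × ℕ) (by unfold CornerAdj SideAdj; omega) (g _ _ (by omega) (by omega)) (g _ _ (by omega) (by omega)) h1 h2
  have rRD : ((i+2, j+1) : ℕ × ℕ) ∉ W → ((i+1, j) : ℕ × ℕ) ∉ W → (BG M W).Reachable ((i+2, j+1) : ℕ × ℕ) ((i+1, j) : ℕ × ℕ) := fun h1 h2 =>
    adj ((i+2, j+1) : ℕ × ℕ) ((i+1, j) : ℕ × ℕ) (by unfold CornerAdj SideAdj; omega) (g _ _ (by omega) (by omega)) (g _ _ (by omega) (by omega)) h1 h2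
  have rDL : ((i+1, j) : ℕ × ℕ) ∉ W → ((i, j+1) : ℕ × ℕ) ∉ W → (BG M W).Reachable ((i+1, j) : ℕ × ℕ) ((i, j+1) : ℕ × ℕ) := fun h1 h2 =>
    adj ((i+1, j) : ℕ × ℕ) ((i, j+1) : ℕ × ℕ) (by unfold CornerAdj SideAdj; omega) (g _ _ (by omega) (by omega)) (g _ _ (by omega) (by omega)) h1 h2
  have rLU : ((i, j+1) : ℕ × ℕ) ∉ W → ((i+1, j+2) : ℕ × ℕ) ∉ W → (BG M W).Reachable ((i, j+1) : ℕ × ℕ) ((i+1, j+2) : ℕ × ℕ) := fun h1 h2 =>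
    adj ((i, j+1) : ℕ × ℕ) ((i+1, j+2) : ℕ × ℕ) (by unfold CornerAdj SideAdj; omega) (g _ _ (by omega) (by omega)) (g _ _ (by omega) (by omega)) h1 h2
  have hUD : ((i+1, j+2) : ℕ × ℕ) ∉ W → ((i+1, j) : ℕ × ℕ) ∉ W → (BG M W).Reachable ((i+1, j+2) : ℕ × ℕ) ((i+1, j) : ℕ × ℕ) := by
    intro h1 h2
    by_cases hRW : ((i+2, j+1) : ℕ × ℕ) ∈ W
    · have hLW : ((i, j+1) : ℕ × ℕ) ∉ W := by
        intro hLW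
        have heq := hOne ((i, j+1) : ℕ × ℕ) ((i+2, j+1) : ℕ × ℕ) (by unfold SideAdj; omega) (by unfold SideAdj; omega) hLW hRW
        rw [Prod.mk.injEq] at heq
        omega
      exact ((rLU hLW h1).symm).trans ((rDL h2 hLW).symm)
    · exact (rUR h1 hRW).trans (rRD hRW h2)
  have hRL : ((i+2, j+1) : ℕ × ℕ) ∉ W → ((i, j+1) : ℕ × ℕ) ∉ W → (BG M W).Reachable ((i+2, j+1) : ℕ × ℕ) ((i, j+1) : ℕ × ℕ) := by
    intro h1 h2
    by_cases hUW : ((i+1, j+2) : ℕ × ℕ) ∈ W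
    · have hDW : ((i+1, j) : ℕ × ℕ) ∉ W := by
        intro hDW
        have heq := hOne ((i+1, j+2) : ℕ × ℕ) ((i+1, j) : ℕ × ℕ) (by unfold SideAdj; omega) (by unfold SideAdj; omega) hUW hDW
        rw [Prod.mk.injEq] at heq
        omega
      exact (rRD h1 hDW).trans (rDL hDW h2)
    · exact ((rUR hUW h1).symm).trans (rLU h2 hUW).symm
  have sides_reach : ∀ s t : ℕ × ℕ, (s = ((i+1, j+2) : ℕ × ℕ) ∨ s = ((i+2, j+1) : ℕ × ℕ) ∨ s = ((i+1, j) : ℕ × ℕ) ∨ s = ((i, j+1) : ℕ × ℕ)) →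
      (t = ((i+1, j+2) : ℕ × ℕ) ∨ t = ((i+2, j+1) : ℕ × ℕ) ∨ t = ((i+1, j) : ℕ × ℕ) ∨ t = ((i, j+1) : ℕ × ℕ)) → s ∉ W → t ∉ W → (BG M W).Reachable s t := by
    intro s t hs ht hsW htW
    rcases hs with rfl | rfl | rfl | rfl <;> rcases ht with rfl | rfl | rfl | rfl <;>
    first
      | exact SimpleGraph.Reachable.refl _
      | exact rUR hsW htW | exact (rUR htW hsW).symm
      | exact rRD hsW htW | exact (rRD htW hsW).symm
      | exact rDL hsW htW | exact (rDL htW hsW).symm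
      | exact rLU hsW htW | exact (rLU htW hsW).symm
      | exact hUD hsW htW | exact (hUD htW hsW).symm
      | exact hRL hsW htW | exact (hRL htW hsW).symm
  have toSide : ∀ a : ℕ × ℕ, a ∉ W → CornerAdj a (i+1, j+1) →
      ∃ s : ℕ × ℕ, (s = ((i+1, j+2) : ℕ × ℕ) ∨ s = ((i+2, j+1) : ℕ × ℕ) ∨ s = ((i+1, j) : ℕ × ℕ) ∨ s = ((i, j+1) : ℕ × ℕ)) ∧ s ∉ W ∧ (BG M W).Reachable a s := by
    intro a haW hadja
    have h8 : a = ((i, j) : ℕ × ℕ) ∨ a = ((i, j+1) : ℕ × ℕ) ∨ a = ((i, j+2) : ℕ × ℕ) ∨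
        a = ((i+1, j) : ℕ × ℕ) ∨ a = ((i+1, j+2) : ℕ × ℕ) ∨ a = ((i+2, j) : ℕ × ℕ) ∨
        a = ((i+2, j+1) : ℕ × ℕ) ∨ a = ((i+2, j+2) : ℕ × ℕ) := by
      clear * - hadja
      obtain ⟨a1, a2⟩ := a
      unfold CornerAdj SideAdj at hadja
      simp only [Prod.mk.injEq]
      omega
    rcases h8 with rfl | rfl | rfl | rfl | rfl | rfl | rfl | rfl
    · by_cases hW1 : ((i+1, j) : ℕ × ℕ) ∈ W
      · have hW2 : ((i, j+1) : ℕ × ℕ) ∉ W := by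
          intro hW2
          have heq := hOne ((i+1, j) : ℕ × ℕ) ((i, j+1) : ℕ × ℕ) (by unfold SideAdj; omega) (by unfold SideAdj; omega) hW1 hW2
          rw [Prod.mk.injEq] at heq
          omega
        exact ⟨((i, j+1) : ℕ × ℕ), Or.inr (Or.inr (Or.inr rfl)), hW2, adj _ ((i, j+1) : ℕ × ℕ) (by unfold CornerAdj SideAdj; omega) (g _ _ (by omega) (by omega)) (g _ _ (by omega) (by omega)) haW hW2⟩
      · exact ⟨((i+1, j) : ℕ × ℕ), Or.inr (Or.inr (Or.inl rfl)), hW1, adj _ ((i+1, j) : ℕ × ℕ) (by unfold CornerAdj SideAdj; omega) (g _ _ (by omega) (by omega)) (g _ _ (by omega) (by omega)) haW hW1⟩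
    · exact ⟨((i, j+1) : ℕ × ℕ), Or.inr (Or.inr (Or.inr rfl)), haW, SimpleGraph.Reachable.refl _⟩
    · by_cases hW1 : ((i+1, j+2) : ℕ × ℕ) ∈ W
      · have hW2 : ((i, j+1) : ℕ × ℕ) ∉ W := by
          intro hW2
          have heq := hOne ((i+1, j+2) : ℕ × ℕ) ((i, j+1) : ℕ × ℕ) (by unfold SideAdj; omega) (by unfold SideAdj; omega) hW1 hW2
          rw [Prod.mk.injEq] at heq
          omega
        exact ⟨((i, j+1) : ℕ × ℕ), Or.inr (Or.inr (Or.inr rfl)), hW2, adj _ ((i, j+1) : ℕ × ℕ) (by unfold CornerAdj SideAdj; omega) (g _ _ (by omega) (by omega)) (g _ _ (by omega) (by omega)) haW hW2⟩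
      · exact ⟨((i+1, j+2) : ℕ × ℕ), Or.inl rfl, hW1, adj _ ((i+1, j+2) : ℕ × ℕ) (by unfold CornerAdj SideAdj; omega) (g _ _ (by omega) (by omega)) (g _ _ (by omega) (by omega)) haW hW1⟩
    · exact ⟨((i+1, j) : ℕ × ℕ), Or.inr (Or.inr (Or.inl rfl)), haW, SimpleGraph.Reachable.refl _⟩
    · exact ⟨((i+1, j+2) : ℕ × ℕ), Or.inl rfl, haW, SimpleGraph.Reachable.refl _⟩
    · by_cases hW1 : ((i+1, j) : ℕ × ℕ) ∈ W
      · have hW2 : ((i+2, j+1) : ℕ × ℕ) ∉ W := by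
          intro hW2
          have heq := hOne ((i+1, j) : ℕ × ℕ) ((i+2, j+1) : ℕ × ℕ) (by unfold SideAdj; omega) (by unfold SideAdj; omega) hW1 hW2
          rw [Prod.mk.injEq] at heq
          omega
        exact ⟨((i+2, j+1) : ℕ × ℕ), Or.inr (Or.inl rfl), hW2, adj _ ((i+2, j+1) : ℕ × ℕ) (by unfold CornerAdj SideAdj; omega) (g _ _ (by omega) (by omega)) (g _ _ (by omega) (by omega)) haW hW2⟩
      · exact ⟨((i+1, j) : ℕ × ℕ), Or.inr (Or.inr (Or.inl rfl)), hW1, adj _ ((i+1, j) : ℕ × ℕ) (by unfold CornerAdj SideAdj; omega) (g _ _ (by omega) (by omega)) (g _ _ (by omega) (by omega)) haW hW1⟩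
    · exact ⟨((i+2, j+1) : ℕ × ℕ), Or.inr (Or.inl rfl), haW, SimpleGraph.Reachable.refl _⟩
    · by_cases hW1 : ((i+1, j+2) : ℕ × ℕ) ∈ W
      · have hW2 : ((i+2, j+1) : ℕ × ℕ) ∉ W := by
          intro hW2
          have heq := hOne ((i+1, j+2) : ℕ × ℕ) ((i+2, j+1) : ℕ × ℕ) (by unfold SideAdj; omega) (by unfold SideAdj; omega) hW1 hW2
          rw [Prod.mk.injEq] at heq
          omega
        exact ⟨((i+2, j+1) : ℕ × ℕ), Or.inr (Or.inl rfl), hW2, adj _ ((i+2, j+1) : ℕ × ℕ) (by unfold CornerAdj SideAdj; omega) (g _ _ (by omega) (by omega)) (g _ _ (by omega) (by omega)) haW hW2⟩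
      · exact ⟨((i+1, j+2) : ℕ × ℕ), Or.inl rfl, hW1, adj _ ((i+1, j+2) : ℕ × ℕ) (by unfold CornerAdj SideAdj; omega) (g _ _ (by omega) (by omega)) (g _ _ (by omega) (by omega)) haW hW1⟩
  obtain ⟨s, hs, hsW, hqs⟩ := toSide q hq hadj
  obtain ⟨s', hs', hsW', hqs'⟩ := toSide q' hq' hadj'
  exact (hqs.trans (sides_reach s s' hs hs' hsW hsW')).trans hqs'.symm

lemma ring0 (M : ℕ) (W : Set (ℕ × ℕ)) (ℓ : ℕ × ℕ)
    (hgrid : inGrid M ℓ) (hb : IsBorder M ℓ)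
    (hleaf : ∀ u ∈ W, ∀ v ∈ W, SideAdj ℓ u → SideAdj ℓ v → u = v)
    (q : ℕ × ℕ) (hq : q ∉ W) (hqg : inGrid M q) (hadj : CornerAdj q ℓ) :
    ∃ c, inGrid M c ∧ c ∉ W ∧ IsBorder M c ∧ (BG M W).Reachable q c := by
  by_cases hqB : IsBorder M q
  · exact ⟨q, hqg, hq, hqB, SimpleGraph.Reachable.refl _⟩
  obtain ⟨l1, l2⟩ := ℓ
  obtain ⟨x, y⟩ := q
  have hgl1 : l1 < M := hgrid.1
  have hgl2 : l2 < M := hgrid.2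
  have hgx : x < M := hqg.1
  have hgy : y < M := hqg.2
  have hM3 : 3 ≤ M := by
    unfold CornerAdj SideAdj at hadj
    unfold IsBorder at hqB
    omega
  obtain ⟨K, rfl⟩ : ∃ K, M = K + 3 := ⟨M - 3, by omega⟩
  have hOne : ∀ u v : ℕ × ℕ, SideAdj (l1, l2) u → SideAdj (l1, l2) v →
      u ∈ W → v ∈ W → u = v := fun u v h1 h2 hu hv => hleaf u hu v hv h1 h2
  have adj : ∀ a b : ℕ × ℕ, CornerAdj a b → inGrid (K+3) a → inGrid (K+3) b → a ∉ W → b ∉ W →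
      (BG (K+3) W).Reachable a b := fun a b h g1 g2 n1 n2 =>
    SimpleGraph.Adj.reachable ⟨h, g1, g2, n1, n2⟩
  have hqB' : x ≠ 0 ∧ y ≠ 0 ∧ x ≠ K + 2 ∧ y ≠ K + 2 := by
    unfold IsBorder at hqB; omega
  have hb4 : l1 = 0 ∨ l2 = 0 ∨ l1 = K + 2 ∨ l2 = K + 2 := by
    unfold IsBorder at hb; omega
  rcases hb4 with h0 | h0 | h0 | h0 <;> subst h0
  · have hkey : x = 1 ∧ (y + 1 = l2 ∨ y = l2 ∨ y = l2 + 1) := by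
      unfold CornerAdj SideAdj at hadj
      unfold IsBorder at hqB
      omega
    obtain ⟨he1, hy⟩ := hkey
    subst he1
    rcases hy with h | h | h
    · subst h
      by_cases hDW : ((0, y) : ℕ × ℕ) ∈ W
      · have hRW : ((1, y+1) : ℕ × ℕ) ∉ W := fun hW2' => by have heq := hOne ((0, y) : ℕ × ℕ) ((1, y+1) : ℕ × ℕ) (by unfold SideAdj; omega) (by unfold SideAdj; omega) hDW hW2'; rw [Prod.mk.injEq] at heq; omega
        by_cases htop : y + 2 = K + 3
        · exact ⟨((1, y+1) : ℕ × ℕ), ⟨by omega, by omega⟩, hRW, by unfold IsBorder; omega, adj _ ((1, y+1) : ℕ × ℕ) (by unfold CornerAdj SideAdj; omega) ⟨by omega, by omega⟩ ⟨by omega, by omega⟩ hq hRW⟩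
        · have hUW : ((0, y+2) : ℕ × ℕ) ∉ W := fun hW2' => by have heq := hOne ((0, y) : ℕ × ℕ) ((0, y+2) : ℕ × ℕ) (by unfold SideAdj; omega) (by unfold SideAdj; omega) hDW hW2'; rw [Prod.mk.injEq] at heq; omega
          exact ⟨((0, y+2) : ℕ × ℕ), ⟨by omega, by omega⟩, hUW, by unfold IsBorder; omega, (adj _ ((1, y+1) : ℕ × ℕ) (by unfold CornerAdj SideAdj; omega) ⟨by omega, by omega⟩ ⟨by omega, by omega⟩ hq hRW).trans (adj ((1, y+1) : ℕ × ℕ) ((0, y+2) : ℕ × ℕ) (by unfold CornerAdj SideAdj; omega) ⟨by omega, by omega⟩ ⟨by omega, by omega⟩ hRW hUW)⟩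
      · exact ⟨((0, y) : ℕ × ℕ), ⟨by omega, by omega⟩, hDW, by unfold IsBorder; omega, adj _ ((0, y) : ℕ × ℕ) (by unfold CornerAdj SideAdj; omega) ⟨by omega, by omega⟩ ⟨by omega, by omega⟩ hq hDW⟩
    · subst h
      obtain ⟨j, rfl⟩ : ∃ j, y = j + 1 := ⟨y - 1, by unfold IsBorder at hqB; omega⟩
      by_cases hUW : ((0, j+2) : ℕ × ℕ) ∈ W
      · have hDW : ((0, j) : ℕ × ℕ) ∉ W := fun hW2' => by have heq := hOne ((0, j+2) : ℕ × ℕ) ((0, j) : ℕ × ℕ) (by unfold SideAdj; omega) (by unfold SideAdj; omega) hUW hW2'; rw [Prod.mk.injEq] at heq; omega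
        exact ⟨((0, j) : ℕ × ℕ), ⟨by omega, by omega⟩, hDW, by unfold IsBorder; omega, adj _ ((0, j) : ℕ × ℕ) (by unfold CornerAdj SideAdj; omega) ⟨by omega, by omega⟩ ⟨by omega, by omega⟩ hq hDW⟩
      · exact ⟨((0, j+2) : ℕ × ℕ), ⟨by omega, by omega⟩, hUW, by unfold IsBorder; omega, adj _ ((0, j+2) : ℕ × ℕ) (by unfold CornerAdj SideAdj; omega) ⟨by omega, by omega⟩ ⟨by omega, by omega⟩ hq hUW⟩
    · subst h
      by_cases hUW : ((0, l2+1) : ℕ × ℕ) ∈ W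
      · have hRW : ((1, l2) : ℕ × ℕ) ∉ W := fun hW2' => by have heq := hOne ((0, l2+1) : ℕ × ℕ) ((1, l2) : ℕ × ℕ) (by unfold SideAdj; omega) (by unfold SideAdj; omega) hUW hW2'; rw [Prod.mk.injEq] at heq; omega
        by_cases hl0 : l2 = 0
        · subst hl0
          exact ⟨((1, 0) : ℕ × ℕ), ⟨by omega, by omega⟩, hRW, by unfold IsBorder; omega, adj _ ((1, 0) : ℕ × ℕ) (by unfold CornerAdj SideAdj; omega) ⟨by omega, by omega⟩ ⟨by omega, by omega⟩ hq hRW⟩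
        · obtain ⟨j, rfl⟩ : ∃ j, l2 = j + 1 := ⟨l2 - 1, by omega⟩
          have hDW : ((0, j) : ℕ × ℕ) ∉ W := fun hW2' => by have heq := hOne ((0, j+2) : ℕ × ℕ) ((0, j) : ℕ × ℕ) (by unfold SideAdj; omega) (by unfold SideAdj; omega) hUW hW2'; rw [Prod.mk.injEq] at heq; omega
          exact ⟨((0, j) : ℕ × ℕ), ⟨by omega, by omega⟩, hDW, by unfold IsBorder; omega, (adj _ ((1, j+1) : ℕ × ℕ) (by unfold CornerAdj SideAdj; omega) ⟨by omega, by omega⟩ ⟨by omega, by omega⟩ hq hRW).trans (adj ((1, j+1) : ℕ × ℕ) ((0, j) : ℕ × ℕ) (by unfold CornerAdj SideAdj; omega) ⟨by omega, by omega⟩ ⟨by omega, by omega⟩ hRW hDW)⟩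
      · exact ⟨((0, l2+1) : ℕ × ℕ), ⟨by omega, by omega⟩, hUW, by unfold IsBorder; omega, adj _ ((0, l2+1) : ℕ × ℕ) (by unfold CornerAdj SideAdj; omega) ⟨by omega, by omega⟩ ⟨by omega, by omega⟩ hq hUW⟩
  · have hkey : y = 1 ∧ (x + 1 = l1 ∨ x = l1 ∨ x = l1 + 1) := by
      unfold CornerAdj SideAdj at hadj
      unfold IsBorder at hqB
      omega
    obtain ⟨he1, hy⟩ := hkey
    subst he1
    rcases hy with h | h | h
    · subst h
      by_cases hDW : ((x, 0) : ℕ × ℕ) ∈ W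
      · have hRW : ((x+1, 1) : ℕ × ℕ) ∉ W := fun hW2' => by have heq := hOne ((x, 0) : ℕ × ℕ) ((x+1, 1) : ℕ × ℕ) (by unfold SideAdj; omega) (by unfold SideAdj; omega) hDW hW2'; rw [Prod.mk.injEq] at heq; omega
        by_cases htop : x + 2 = K + 3
        · exact ⟨((x+1, 1) : ℕ × ℕ), ⟨by omega, by omega⟩, hRW, by unfold IsBorder; omega, adj _ ((x+1, 1) : ℕ × ℕ) (by unfold CornerAdj SideAdj; omega) ⟨by omega, by omega⟩ ⟨by omega, by omega⟩ hq hRW⟩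
        · have hUW : ((x+2, 0) : ℕ × ℕ) ∉ W := fun hW2' => by have heq := hOne ((x, 0) : ℕ × ℕ) ((x+2, 0) : ℕ × ℕ) (by unfold SideAdj; omega) (by unfold SideAdj; omega) hDW hW2'; rw [Prod.mk.injEq] at heq; omega
          exact ⟨((x+2, 0) : ℕ × ℕ), ⟨by omega, by omega⟩, hUW, by unfold IsBorder; omega, (adj _ ((x+1, 1) : ℕ × ℕ) (by unfold CornerAdj SideAdj; omega) ⟨by omega, by omega⟩ ⟨by omega, by omega⟩ hq hRW).trans (adj ((x+1, 1) : ℕ × ℕ) ((x+2, 0) : ℕ × ℕ) (by unfold CornerAdj SideAdj; omega) ⟨by omega, by omega⟩ ⟨by omega, by omega⟩ hRW hUW)⟩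
      · exact ⟨((x, 0) : ℕ × ℕ), ⟨by omega, by omega⟩, hDW, by unfold IsBorder; omega, adj _ ((x, 0) : ℕ × ℕ) (by unfold CornerAdj SideAdj; omega) ⟨by omega, by omega⟩ ⟨by omega, by omega⟩ hq hDW⟩
    · subst h
      obtain ⟨j, rfl⟩ : ∃ j, x = j + 1 := ⟨x - 1, by unfold IsBorder at hqB; omega⟩
      by_cases hUW : ((j+2, 0) : ℕ × ℕ) ∈ W
      · have hDW : ((j, 0) : ℕ × ℕ) ∉ W := fun hW2' => by have heq := hOne ((j+2, 0) : ℕ × ℕ) ((j, 0) : ℕ × ℕ) (by unfold SideAdj; omega) (by unfold SideAdj; omega) hUW hW2'; rw [Prod.mk.injEq] at heq; omega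
        exact ⟨((j, 0) : ℕ × ℕ), ⟨by omega, by omega⟩, hDW, by unfold IsBorder; omega, adj _ ((j, 0) : ℕ × ℕ) (by unfold CornerAdj SideAdj; omega) ⟨by omega, by omega⟩ ⟨by omega, by omega⟩ hq hDW⟩
      · exact ⟨((j+2, 0) : ℕ × ℕ), ⟨by omega, by omega⟩, hUW, by unfold IsBorder; omega, adj _ ((j+2, 0) : ℕ × ℕ) (by unfold CornerAdj SideAdj; omega) ⟨by omega, by omega⟩ ⟨by omega, by omega⟩ hq hUW⟩
    · subst h
      by_cases hUW : ((l1+1, 0) : ℕ × ℕ) ∈ W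
      · have hRW : ((l1, 1) : ℕ × ℕ) ∉ W := fun hW2' => by have heq := hOne ((l1+1, 0) : ℕ × ℕ) ((l1, 1) : ℕ × ℕ) (by unfold SideAdj; omega) (by unfold SideAdj; omega) hUW hW2'; rw [Prod.mk.injEq] at heq; omega
        by_cases hl0 : l1 = 0
        · subst hl0
          exact ⟨((0, 1) : ℕ × ℕ), ⟨by omega, by omega⟩, hRW, by unfold IsBorder; omega, adj _ ((0, 1) : ℕ × ℕ) (by unfold CornerAdj SideAdj; omega) ⟨by omega, by omega⟩ ⟨by omega, by omega⟩ hq hRW⟩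
        · obtain ⟨j, rfl⟩ : ∃ j, l1 = j + 1 := ⟨l1 - 1, by omega⟩
          have hDW : ((j, 0) : ℕ × ℕ) ∉ W := fun hW2' => by have heq := hOne ((j+2, 0) : ℕ × ℕ) ((j, 0) : ℕ × ℕ) (by unfold SideAdj; omega) (by unfold SideAdj; omega) hUW hW2'; rw [Prod.mk.injEq] at heq; omega
          exact ⟨((j, 0) : ℕ × ℕ), ⟨by omega, by omega⟩, hDW, by unfold IsBorder; omega, (adj _ ((j+1, 1) : ℕ × ℕ) (by unfold CornerAdj SideAdj; omega) ⟨by omega, by omega⟩ ⟨by omega, by omega⟩ hq hRW).trans (adj ((j+1, 1) : ℕ × ℕ) ((j, 0) : ℕ × ℕ) (by unfold CornerAdj SideAdj; omega) ⟨by omega, by omega⟩ ⟨by omega, by omega⟩ hRW hDW)⟩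
      · exact ⟨((l1+1, 0) : ℕ × ℕ), ⟨by omega, by omega⟩, hUW, by unfold IsBorder; omega, adj _ ((l1+1, 0) : ℕ × ℕ) (by unfold CornerAdj SideAdj; omega) ⟨by omega, by omega⟩ ⟨by omega, by omega⟩ hq hUW⟩
  · have hkey : x = K+1 ∧ (y + 1 = l2 ∨ y = l2 ∨ y = l2 + 1) := by
      unfold CornerAdj SideAdj at hadj
      unfold IsBorder at hqB
      omega
    obtain ⟨he1, hy⟩ := hkey
    subst he1
    rcases hy with h | h | h
    · subst h
      by_cases hDW : ((K+2, y) : ℕ × ℕ) ∈ W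
      · have hRW : ((K+1, y+1) : ℕ × ℕ) ∉ W := fun hW2' => by have heq := hOne ((K+2, y) : ℕ × ℕ) ((K+1, y+1) : ℕ × ℕ) (by unfold SideAdj; omega) (by unfold SideAdj; omega) hDW hW2'; rw [Prod.mk.injEq] at heq; omega
        by_cases htop : y + 2 = K + 3
        · exact ⟨((K+1, y+1) : ℕ × ℕ), ⟨by omega, by omega⟩, hRW, by unfold IsBorder; omega, adj _ ((K+1, y+1) : ℕ × ℕ) (by unfold CornerAdj SideAdj; omega) ⟨by omega, by omega⟩ ⟨by omega, by omega⟩ hq hRW⟩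
        · have hUW : ((K+2, y+2) : ℕ × ℕ) ∉ W := fun hW2' => by have heq := hOne ((K+2, y) : ℕ × ℕ) ((K+2, y+2) : ℕ × ℕ) (by unfold SideAdj; omega) (by unfold SideAdj; omega) hDW hW2'; rw [Prod.mk.injEq] at heq; omega
          exact ⟨((K+2, y+2) : ℕ × ℕ), ⟨by omega, by omega⟩, hUW, by unfold IsBorder; omega, (adj _ ((K+1, y+1) : ℕ × ℕ) (by unfold CornerAdj SideAdj; omega) ⟨by omega, by omega⟩ ⟨by omega, by omega⟩ hq hRW).trans (adj ((K+1, y+1) : ℕ × ℕ) ((K+2, y+2) : ℕ × ℕ) (by unfold CornerAdj SideAdj; omega) ⟨by omega, by omega⟩ ⟨by omega, by omega⟩ hRW hUW)⟩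
      · exact ⟨((K+2, y) : ℕ × ℕ), ⟨by omega, by omega⟩, hDW, by unfold IsBorder; omega, adj _ ((K+2, y) : ℕ × ℕ) (by unfold CornerAdj SideAdj; omega) ⟨by omega, by omega⟩ ⟨by omega, by omega⟩ hq hDW⟩
    · subst h
      obtain ⟨j, rfl⟩ : ∃ j, y = j + 1 := ⟨y - 1, by unfold IsBorder at hqB; omega⟩
      by_cases hUW : ((K+2, j+2) : ℕ × ℕ) ∈ W
      · have hDW : ((K+2, j) : ℕ × ℕ) ∉ W := fun hW2' => by have heq := hOne ((K+2, j+2) : ℕ × ℕ) ((K+2, j) : ℕ × ℕ) (by unfold SideAdj; omega) (by unfold SideAdj; omega) hUW hW2'; rw [Prod.mk.injEq] at heq; omega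
        exact ⟨((K+2, j) : ℕ × ℕ), ⟨by omega, by omega⟩, hDW, by unfold IsBorder; omega, adj _ ((K+2, j) : ℕ × ℕ) (by unfold CornerAdj SideAdj; omega) ⟨by omega, by omega⟩ ⟨by omega, by omega⟩ hq hDW⟩
      · exact ⟨((K+2, j+2) : ℕ × ℕ), ⟨by omega, by omega⟩, hUW, by unfold IsBorder; omega, adj _ ((K+2, j+2) : ℕ × ℕ) (by unfold CornerAdj SideAdj; omega) ⟨by omega, by omega⟩ ⟨by omega, by omega⟩ hq hUW⟩
    · subst h
      by_cases hUW : ((K+2, l2+1) : ℕ × ℕ) ∈ W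
      · have hRW : ((K+1, l2) : ℕ × ℕ) ∉ W := fun hW2' => by have heq := hOne ((K+2, l2+1) : ℕ × ℕ) ((K+1, l2) : ℕ × ℕ) (by unfold SideAdj; omega) (by unfold SideAdj; omega) hUW hW2'; rw [Prod.mk.injEq] at heq; omega
        by_cases hl0 : l2 = 0
        · subst hl0
          exact ⟨((K+1, 0) : ℕ × ℕ), ⟨by omega, by omega⟩, hRW, by unfold IsBorder; omega, adj _ ((K+1, 0) : ℕ × ℕ) (by unfold CornerAdj SideAdj; omega) ⟨by omega, by omega⟩ ⟨by omega, by omega⟩ hq hRW⟩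
        · obtain ⟨j, rfl⟩ : ∃ j, l2 = j + 1 := ⟨l2 - 1, by omega⟩
          have hDW : ((K+2, j) : ℕ × ℕ) ∉ W := fun hW2' => by have heq := hOne ((K+2, j+2) : ℕ × ℕ) ((K+2, j) : ℕ × ℕ) (by unfold SideAdj; omega) (by unfold SideAdj; omega) hUW hW2'; rw [Prod.mk.injEq] at heq; omega
          exact ⟨((K+2, j) : ℕ × ℕ), ⟨by omega, by omega⟩, hDW, by unfold IsBorder; omega, (adj _ ((K+1, j+1) : ℕ × ℕ) (by unfold CornerAdj SideAdj; omega) ⟨by omega, by omega⟩ ⟨by omega, by omega⟩ hq hRW).trans (adj ((K+1, j+1) : ℕ × ℕ) ((K+2, j) : ℕ × ℕ) (by unfold CornerAdj SideAdj; omega) ⟨by omega, by omega⟩ ⟨by omega, by omega⟩ hRW hDW)⟩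
      · exact ⟨((K+2, l2+1) : ℕ × ℕ), ⟨by omega, by omega⟩, hUW, by unfold IsBorder; omega, adj _ ((K+2, l2+1) : ℕ × ℕ) (by unfold CornerAdj SideAdj; omega) ⟨by omega, by omega⟩ ⟨by omega, by omega⟩ hq hUW⟩
  · have hkey : y = K+1 ∧ (x + 1 = l1 ∨ x = l1 ∨ x = l1 + 1) := by
      unfold CornerAdj SideAdj at hadj
      unfold IsBorder at hqB
      omega
    obtain ⟨he1, hy⟩ := hkey
    subst he1
    rcases hy with h | h | h
    · subst h
      by_cases hDW : ((x, K+2) : ℕ × ℕ) ∈ W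
      · have hRW : ((x+1, K+1) : ℕ × ℕ) ∉ W := fun hW2' => by have heq := hOne ((x, K+2) : ℕ × ℕ) ((x+1, K+1) : ℕ × ℕ) (by unfold SideAdj; omega) (by unfold SideAdj; omega) hDW hW2'; rw [Prod.mk.injEq] at heq; omega
        by_cases htop : x + 2 = K + 3
        · exact ⟨((x+1, K+1) : ℕ × ℕ), ⟨by omega, by omega⟩, hRW, by unfold IsBorder; omega, adj _ ((x+1, K+1) : ℕ × ℕ) (by unfold CornerAdj SideAdj; omega) ⟨by omega, by omega⟩ ⟨by omega, by omega⟩ hq hRW⟩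
        · have hUW : ((x+2, K+2) : ℕ × ℕ) ∉ W := fun hW2' => by have heq := hOne ((x, K+2) : ℕ × ℕ) ((x+2, K+2) : ℕ × ℕ) (by unfold SideAdj; omega) (by unfold SideAdj; omega) hDW hW2'; rw [Prod.mk.injEq] at heq; omega
          exact ⟨((x+2, K+2) : ℕ × ℕ), ⟨by omega, by omega⟩, hUW, by unfold IsBorder; omega, (adj _ ((x+1, K+1) : ℕ × ℕ) (by unfold CornerAdj SideAdj; omega) ⟨by omega, by omega⟩ ⟨by omega, by omega⟩ hq hRW).trans (adj ((x+1, K+1) : ℕ × ℕ) ((x+2, K+2) : ℕ × ℕ) (by unfold CornerAdj SideAdj; omega) ⟨by omega, by omega⟩ ⟨by omega, by omega⟩ hRW hUW)⟩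
      · exact ⟨((x, K+2) : ℕ × ℕ), ⟨by omega, by omega⟩, hDW, by unfold IsBorder; omega, adj _ ((x, K+2) : ℕ × ℕ) (by unfold CornerAdj SideAdj; omega) ⟨by omega, by omega⟩ ⟨by omega, by omega⟩ hq hDW⟩
    · subst h
      obtain ⟨j, rfl⟩ : ∃ j, x = j + 1 := ⟨x - 1, by unfold IsBorder at hqB; omega⟩
      by_cases hUW : ((j+2, K+2) : ℕ × ℕ) ∈ W
      · have hDW : ((j, K+2) : ℕ × ℕ) ∉ W := fun hW2' => by have heq := hOne ((j+2, K+2) : ℕ × ℕ) ((j, K+2) : ℕ × ℕ) (by unfold SideAdj; omega) (by unfold SideAdj; omega) hUW hW2'; rw [Prod.mk.injEq] at heq; omega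
        exact ⟨((j, K+2) : ℕ × ℕ), ⟨by omega, by omega⟩, hDW, by unfold IsBorder; omega, adj _ ((j, K+2) : ℕ × ℕ) (by unfold CornerAdj SideAdj; omega) ⟨by omega, by omega⟩ ⟨by omega, by omega⟩ hq hDW⟩
      · exact ⟨((j+2, K+2) : ℕ × ℕ), ⟨by omega, by omega⟩, hUW, by unfold IsBorder; omega, adj _ ((j+2, K+2) : ℕ × ℕ) (by unfold CornerAdj SideAdj; omega) ⟨by omega, by omega⟩ ⟨by omega, by omega⟩ hq hUW⟩
    · subst h
      by_cases hUW : ((l1+1, K+2) : ℕ × ℕ) ∈ W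
      · have hRW : ((l1, K+1) : ℕ × ℕ) ∉ W := fun hW2' => by have heq := hOne ((l1+1, K+2) : ℕ × ℕ) ((l1, K+1) : ℕ × ℕ) (by unfold SideAdj; omega) (by unfold SideAdj; omega) hUW hW2'; rw [Prod.mk.injEq] at heq; omega
        by_cases hl0 : l1 = 0
        · subst hl0
          exact ⟨((0, K+1) : ℕ × ℕ), ⟨by omega, by omega⟩, hRW, by unfold IsBorder; omega, adj _ ((0, K+1) : ℕ × ℕ) (by unfold CornerAdj SideAdj; omega) ⟨by omega, by omega⟩ ⟨by omega, by omega⟩ hq hRW⟩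
        · obtain ⟨j, rfl⟩ : ∃ j, l1 = j + 1 := ⟨l1 - 1, by omega⟩
          have hDW : ((j, K+2) : ℕ × ℕ) ∉ W := fun hW2' => by have heq := hOne ((j+2, K+2) : ℕ × ℕ) ((j, K+2) : ℕ × ℕ) (by unfold SideAdj; omega) (by unfold SideAdj; omega) hUW hW2'; rw [Prod.mk.injEq] at heq; omega
          exact ⟨((j, K+2) : ℕ × ℕ), ⟨by omega, by omega⟩, hDW, by unfold IsBorder; omega, (adj _ ((j+1, K+1) : ℕ × ℕ) (by unfold CornerAdj SideAdj; omega) ⟨by omega, by omega⟩ ⟨by omega, by omega⟩ hq hRW).trans (adj ((j+1, K+1) : ℕ × ℕ) ((j, K+2) : ℕ × ℕ) (by unfold CornerAdj SideAdj; omega) ⟨by omega, by omega⟩ ⟨by omega, by omega⟩ hRW hDW)⟩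
      · exact ⟨((l1+1, K+2) : ℕ × ℕ), ⟨by omega, by omega⟩, hUW, by unfold IsBorder; omega, adj _ ((l1+1, K+2) : ℕ × ℕ) (by unfold CornerAdj SideAdj; omega) ⟨by omega, by omega⟩ ⟨by omega, by omega⟩ hq hUW⟩

lemma up_reach (M x : ℕ) (hx : x < M) :
    ∀ k y, y + k < M → (BG M (∅ : Set (ℕ × ℕ))).Reachable (x, y) (x, y + k) := by
  intro k
  induction k with
  | zero => intro y _; exact SimpleGraph.Reachable.refl _
  | succ k ih =>
    intro y hy
    refine (ih y (by omega)).trans (SimpleGraph.Adj.reachable ?_)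
    exact ⟨Or.inl (Or.inl ⟨rfl, Or.inl rfl⟩), ⟨hx, by omega⟩, ⟨hx, by omega⟩,
      by simp, by simp⟩

lemma escape_empty (M : ℕ) (p : ℕ × ℕ) (hp : inGrid M p) :
    ∃ b, inGrid M b ∧ b ∉ (∅ : Set (ℕ × ℕ)) ∧ IsBorder M b ∧
      (BG M (∅ : Set (ℕ × ℕ))).Reachable p b := by
  obtain ⟨x, y⟩ := p
  have hx : x < M := hp.1
  have hy : y < M := hp.2
  refine ⟨(x, M - 1), ⟨hx, by omega⟩, by simp, Or.inr (Or.inr (Or.inr rfl)), ?_⟩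
  have h1 : y + (M - 1 - y) = M - 1 := by omega
  have := up_reach M x hx (M - 1 - y) y (by omega)
  rwa [h1] at this

lemma key (M : ℕ) (W W' : Set (ℕ × ℕ)) (ℓ : ℕ × ℕ)
    (hW' : ∀ x, x ∉ W' → x ≠ ℓ → x ∉ W)
    (hleafW : ∀ u ∈ W, ∀ v ∈ W, SideAdj ℓ u → SideAdj ℓ v → u = v)
    (b : ℕ × ℕ) (hbg : inGrid M b) (hbB : IsBorder M b) :
    ∀ (k : ℕ) (q : ℕ × ℕ) (w : (BG M W').Walk q b), w.length ≤ k → q ∉ W →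
      ∃ c, inGrid M c ∧ c ∉ W ∧ IsBorder M c ∧ (BG M W).Reachable q c := by
  intro k
  induction k with
  | zero =>
    intro q w hlen hqW
    have : q = b := SimpleGraph.Walk.eq_of_length_eq_zero (Nat.le_zero.mp hlen)
    subst this
    exact ⟨q, hbg, hqW, hbB, SimpleGraph.Reachable.refl _⟩
  | succ k ihk =>
    intro q w hlen hqW
    cases w with
    | nil => exact ⟨b, hbg, hqW, hbB, SimpleGraph.Reachable.refl _⟩
    | @cons _ q' _ h w' =>
      by_cases hℓq' : q' = ℓ
      · subst hℓq'
        by_cases hbord : IsBorder M q'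
        · exact ring0 M W q' h.2.2.1 hbord hleafW q hqW h.2.1 h.1
        · cases w' with
          | nil => exact absurd hbB hbord
          | @cons _ q'' _ h2 w'' =>
            have hq''ne : q'' ≠ q' := fun hh => (BG M W').loopless.irrefl q' (hh ▸ h2)
            have hq''W : q'' ∉ W := hW' q'' h2.2.2.2.2 hq''ne
            have hr1 : (BG M W).Reachable q q'' :=
              ring1 M W q' h.2.2.1 hbord hleafW q q'' hqW h.2.1 h.1
                hq''W h2.2.2.1 (cornerAdj_symm h2.1)
            obtain ⟨c, hc1, hc2, hc3, hc4⟩ := ihk q'' w''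
              (by simp only [SimpleGraph.Walk.length_cons] at hlen ⊢; omega) hq''W
            exact ⟨c, hc1, hc2, hc3, hr1.trans hc4⟩
      · have hq'W : q' ∉ W := hW' q' h.2.2.2.2 hℓq'
        obtain ⟨c, hc1, hc2, hc3, hc4⟩ := ihk q' w'
          (by simp only [SimpleGraph.Walk.length_cons] at hlen ⊢; omega) hq'W
        have edge : (BG M W).Adj q q' := ⟨h.1, h.2.1, h.2.2.1, hqW, hq'W⟩
        exact ⟨c, hc1, hc2, hc3, edge.reachable.trans hc4⟩

lemma escape (M : ℕ) :∀ (n : ℕ) (W : Finset (ℕ × ℕ)), W.card ≤ n → Leafy ↑W →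
    ∀ p, inGrid M p → p ∉ W → ∃ b, inGrid M b ∧ b ∉ W ∧ IsBorder M b ∧
      (BG M ↑W).Reachable p b := by
  intro n
  induction n with
  | zero =>
    intro W hcard _ p hp hpW
    have : W = ∅ := Finset.card_eq_zero.mp (Nat.le_zero.mp hcard)
    subst this
    simpa using escape_empty M p hp
  | succ n ih =>
    intro W hcard hL p hp hpW
    rcases W.eq_empty_or_nonempty with rfl | hne
    · simpa using escape_empty M p hp
    · obtain ⟨ℓ, hℓW, hleaf⟩ := hL W (by simp) hne
      set W' := W.erase ℓ with hW'
      have hL' : Leafy ↑W' := by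
        intro S hS hSne
        exact hL S (fun x hx => Finset.mem_of_mem_erase (hS hx)) hSne
      have hcard' : W'.card ≤ n := by
        have h1 : W'.card = W.card - 1 := by rw [hW']; exact Finset.card_erase_of_mem hℓW
        have h2 := Finset.card_pos.mpr hne
        omega
      have hleafW : ∀ u ∈ (↑W : Set (ℕ × ℕ)), ∀ v ∈ (↑W : Set (ℕ × ℕ)),
          SideAdj ℓ u → SideAdj ℓ v → u = v := by
        intro u hu v hv h1 h2
        exact hleaf u (by simpa using hu) v (by simpa using hv) h1 h2
      obtain ⟨b, hbg, hbW', hbB, hreach⟩ := ih W' hcard' hL' p hp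
        (fun h => hpW (Finset.mem_of_mem_erase h))
      obtain ⟨w⟩ := hreach
      have hsub : ∀ x : ℕ × ℕ, x ∉ (↑W' : Set (ℕ × ℕ)) → x ≠ ℓ → x ∉ (↑W : Set (ℕ × ℕ)) := by
        intro x hx hne2 hmem
        exact hx (by simp [hW', Finset.mem_erase, hne2, Finset.mem_coe.mp hmem])
      obtain ⟨c, hc1, hc2, hc3, hc4⟩ := key M ↑W ↑W' ℓ hsub hleafW b hbg hbB
        w.length p w le_rfl (by simpa using hpW)
      exact ⟨c, hc1, by simpa using hc2, hc3, hc4⟩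

lemma sideAdj_symm {p q : ℕ × ℕ} (h : SideAdj p q) : SideAdj q p := by
  unfold SideAdj at *; omega
lemma mem_of_getLast?' {α : Type*} {l : List α} {y : α} (h : l.getLast? = some y) : y ∈ l := by
  obtain ⟨hne, rfl⟩ := List.mem_getLast?_eq_getLast (by rw [h]; exact rfl)
  exact List.getLast_mem hne

lemma sideAdj_irrefl {p : ℕ × ℕ} (h : SideAdj p p) : False := by
  unfold SideAdj at h; omega

/-- build a walk in `patternGraph A` from a chain list -/
lemma exists_walk (A : Set (ℕ × ℕ)) :
    ∀ (l : List (ℕ × ℕ)) (x y : ℕ × ℕ) (hx : x ∈ A) (hy : y ∈ A),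
      (∀ p ∈ l, p ∈ A) → l.Chain' SideAdj → l.head? = some x → l.getLast? = some y →
      ∃ w : (patternGraph A).Walk ⟨x, hx⟩ ⟨y, hy⟩, w.support.map Subtype.val = l := by
  intro l
  induction l with
  | nil => intro x y _ _ _ _ h1 _; simp at h1
  | cons a t ih =>
    intro x y hx hy hmem hchain hhead hlast
    have hax : a = x := by simpa using hhead
    subst hax
    cases t with
    | nil =>
      have : a = y := by simpa using hlast
      subst this
      exact ⟨SimpleGraph.Walk.nil, by simp⟩
    | cons b t' =>
      have hb : b ∈ A := hmem b (by simp)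
      have hadj : (patternGraph A).Adj ⟨a, hx⟩ ⟨b, hb⟩ := (List.isChain_cons_cons.mp hchain).1
      obtain ⟨w', hw'⟩ := ih b y hb hy (fun p hp => hmem p (List.mem_cons_of_mem _ hp))
        (List.isChain_cons_cons.mp hchain).2 rfl (by simpa using hlast)
      exact ⟨SimpleGraph.Walk.cons hadj w', by simp [hw']⟩

lemma tree_no_shortcut (A : Set (ℕ × ℕ)) (hac : (patternGraph A).IsAcyclic)
    (l : List (ℕ × ℕ)) (hmem : ∀ p ∈ l, p ∈ A) (hchain : l.Chain' SideAdj)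
    (hnodup : l.Nodup) (hlen : 3 ≤ l.length) (x y : ℕ × ℕ)
    (hhead : l.head? = some x) (hlast : l.getLast? = some y) : ¬ SideAdj x y := by
  intro hadj
  have hx : x ∈ A := by
    have : x ∈ l := by
      cases l with
      | nil => simp at hhead
      | cons a t => simp_all
    exact hmem x this
  have hy : y ∈ A := by
    have : y ∈ l := mem_of_getLast?' hlast
    exact hmem y this
  obtain ⟨w1, hw1⟩ := exists_walk A l x y hx hy hmem hchain hhead hlast
  have hxy : x ≠ y := by
    cases l with
    | nil => simp at hhead
    | cons a t =>
      have hax : a = x := by simpa using hhead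
      subst hax
      have hyt : y ∈ t := by
        cases t with
        | nil => simp at hlen
        | cons b t' =>
          have : (b :: t').getLast? = some y := by
            rw [← hlast, List.getLast?_cons_cons]
          exact mem_of_getLast?' this
      intro hh
      exact (List.nodup_cons.mp hnodup).1 (hh ▸ hyt)
  have hQadj : (patternGraph A).Adj ⟨x, hx⟩ ⟨y, hy⟩ := hadj
  have hpath1 : w1.IsPath := by
    rw [SimpleGraph.Walk.isPath_def]
    have := hnodup
    rw [← hw1] at this
    exact this.of_map _
  have w2 : (patternGraph A).Walk ⟨x, hx⟩ ⟨y, hy⟩ := SimpleGraph.Walk.cons hQadj SimpleGraph.Walk.nil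
  have hpath2 : (SimpleGraph.Walk.cons hQadj SimpleGraph.Walk.nil).IsPath := by
    rw [SimpleGraph.Walk.isPath_def]
    simp [hxy, Subtype.ext_iff]
  have := SimpleGraph.isAcyclic_iff_path_unique.mp hac ⟨w1, hpath1⟩ ⟨_, hpath2⟩
  have hsup : w1.support = (SimpleGraph.Walk.cons hQadj SimpleGraph.Walk.nil).support := by
    rw [Subtype.ext_iff] at this
    simp only at this
    rw [this]
  have hlen2 : l.length = 2 := by
    have := congrArg List.length hsup
    rw [SimpleGraph.Walk.length_support, SimpleGraph.Walk.length_support] at this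
    have hl1 := congrArg List.length hw1
    simp at hl1 this
    omega
  omega
open Classical in
lemma leaves (A : Set (ℕ × ℕ)) (hac : (patternGraph A).IsAcyclic)
    (S : Finset (ℕ × ℕ)) (hS : ↑S ⊆ A) (hne : S.Nonempty) :
    ∃ w ∈ S, leafIn ↑S w ∧ (2 ≤ S.card → ∃ w' ∈ S, w' ≠ w ∧ leafIn ↑S w') := by
  classical
  set P : ℕ → Prop := fun n => ∃ l : List (ℕ × ℕ), l.Nodup ∧ l.Chain' SideAdj ∧
    (∀ p ∈ l, p ∈ S) ∧ l.length = n with hP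
  have hlenle : ∀ n, P n → n ≤ S.card := by
    rintro n ⟨l, hnd, _, hmem, rfl⟩
    have h1 : l.toFinset ⊆ S := fun x hx => hmem x (List.mem_toFinset.mp hx)
    have h2 : l.toFinset.card = l.length := List.toFinset_card_of_nodup hnd
    calc l.length = l.toFinset.card := h2.symm
    _ ≤ S.card := Finset.card_le_card h1
  obtain ⟨s0, hs0⟩ := hne
  have hcard1 : 1 ≤ S.card := Finset.card_pos.mpr ⟨s0, hs0⟩
  have hP1 : P 1 := ⟨[s0], by simp, List.IsChain.singleton _, by simpa using hs0, rfl⟩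
  set n₀ := Nat.findGreatest P S.card with hn₀
  have h1n : 1 ≤ n₀ := Nat.le_findGreatest hcard1 hP1
  have hPn : P n₀ := Nat.findGreatest_spec hcard1 hP1
  have hmax : ∀ k, n₀ < k → ¬ P k := by
    intro k hk hPk
    exact Nat.findGreatest_is_greatest hk (hlenle k hPk) hPk
  have leaf_head : ∀ l : List (ℕ × ℕ), l.Nodup → l.Chain' SideAdj →
      (∀ p ∈ l, p ∈ S) → l.length = n₀ → ∀ w, l.head? = some w → leafIn ↑S w := by
    intro l hnd hch hmem hlen w hw
    have hsub : ∀ z ∈ (↑S : Set (ℕ × ℕ)), SideAdj w z → l.tail.head? = some z := by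
      intro z hz hadjz
      have hzS : z ∈ S := hz
      cases l with
      | nil => simp at hw
      | cons a t =>
        have haw : a = w := by simpa using hw
        subst haw
        by_cases hzl : z ∈ a :: t
        · have hza : z ≠ a := fun hh => sideAdj_irrefl (hh ▸ hadjz)
          have hzt : z ∈ t := by
            rcases List.mem_cons.mp hzl with h | h
            · exact absurd h hza
            · exact h
          obtain ⟨t1, t2, rfl⟩ := List.append_of_mem hzt
          cases t1 with
          | nil => simp
          | cons c t1' =>
            exfalso
            set seg : List (ℕ × ℕ) := (a :: c :: t1') ++ [z] with hseg
            have hpre : seg <+: a :: (c :: t1') ++ z :: t2 := ⟨t2, by simp [hseg]⟩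
            have hsegch : seg.Chain' SideAdj := hch.prefix hpre
            have hsegnd : seg.Nodup := hnd.sublist hpre.sublist
            have hsegmem : ∀ p ∈ seg, p ∈ A := by
              intro p hp
              exact hS (hmem p (hpre.sublist.mem hp))
            refine tree_no_shortcut A hac seg hsegmem hsegch hsegnd (by simp only [hseg, List.length_append, List.length_cons]; omega)
              a z (by simp [hseg]) ?_ hadjz
            rw [hseg, List.getLast?_concat]
        · exfalso
          have hP' : P (n₀ + 1) := by
            refine ⟨z :: a :: t, List.nodup_cons.mpr ⟨hzl, hnd⟩,
              List.isChain_cons_cons.mpr ⟨sideAdj_symm hadjz, hch⟩, ?_, by simp [← hlen]⟩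
            intro p hp
            rcases List.mem_cons.mp hp with rfl | hp'
            · exact hzS
            · exact hmem p hp'
          exact hmax (n₀ + 1) (by omega) hP'
    intro u hu v hv hadju hadjv
    have h1 := hsub u hu hadju
    have h2 := hsub v hv hadjv
    rw [h1] at h2
    exact Option.some.inj h2
  obtain ⟨l, hnd, hch, hmem, hlen⟩ := hPn
  by_cases h2 : 2 ≤ n₀
  · cases l with
    | nil => simp at hlen; omega
    | cons a t =>
      have htne : t ≠ [] := by
        intro hh
        rw [hh] at hlen
        simp at hlen
        omega
      have haS : a ∈ S := hmem a (by simp)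
      have leaf1 : leafIn ↑S a := leaf_head (a :: t) hnd hch hmem hlen a rfl
      set y := t.getLast htne with hy
      have hyt : y ∈ t := List.getLast_mem htne
      have hyS : y ∈ S := hmem y (List.mem_cons_of_mem _ hyt)
      have hylast : (a :: t).getLast? = some y := by
        rw [List.getLast?_eq_getLast_of_ne_nil (List.cons_ne_nil a t)]
        congr 1
        exact List.getLast_cons htne
      have hrev_head : (a :: t).reverse.head? = some y := by
        rw [List.head?_reverse]
        exact hylast
      have leaf2 : leafIn ↑S y := by
        refine leaf_head (a :: t).reverse (List.nodup_reverse.mpr hnd) ?_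
          (fun p hp => hmem p (List.mem_reverse.mp hp)) (by simpa using hlen) y hrev_head
        exact List.isChain_reverse.mpr (hch.imp fun a b h => sideAdj_symm h)
      have hya : y ≠ a := by
        intro hh
        exact (List.nodup_cons.mp hnd).1 (hh ▸ hyt)
      exact ⟨a, haS, leaf1, fun _ => ⟨y, hyS, hya, leaf2⟩⟩
  · have hnoedge : ∀ u v : ℕ × ℕ, u ∈ S → v ∈ S → SideAdj u v → False := by
      intro u v hu hv hadj
      have huv : u ≠ v := fun hh => sideAdj_irrefl (hh ▸ hadj)
      have hP2 : P 2 := by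
        refine ⟨[u, v], by simp [huv], List.isChain_pair.mpr hadj, ?_, rfl⟩
        intro p hp
        simp only [List.mem_cons, List.not_mem_nil, or_false] at hp
        rcases hp with rfl | rfl
        · exact hu
        · exact hv
      exact hmax 2 (by omega) hP2
    have hleafany : ∀ w ∈ S, leafIn ↑S w := by
      intro w hw u hu v hv hadju _
      exact ((hnoedge w u hw hu hadju)).elim
    refine ⟨s0, hs0, hleafany s0 hs0, fun hc => ?_⟩
    obtain ⟨a, ha, b, hb, hab⟩ := Finset.one_lt_card.mp hc
    rcases eq_or_ne a s0 with rfl | has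
    · exact ⟨b, hb, Ne.symm hab, hleafany b hb⟩
    · exact ⟨a, ha, has, hleafany a ha⟩


-- block and local coordinates
def bk (m' : ℕ) (q : ℕ × ℕ) : ℕ × ℕ := (q.1 / m', q.2 / m')
def lc (m' : ℕ) (q : ℕ × ℕ) : ℕ × ℕ := (q.1 % m', q.2 % m')

lemma dec_unique {m' a b r s : ℕ} (h : a * m' + r = b * m' + s) (hr : r < m') (hs : s < m') :
    a = b ∧ r = s := by
  rcases Nat.lt_trichotomy a b with hl | he | hl
  · have h1 : a * m' + m' ≤ b * m' := by
      calc a * m' + m' = (a + 1) * m' := by ring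
      _ ≤ b * m' := Nat.mul_le_mul_right _ hl
    omega
  · subst he; omega
  · have h1 : b * m' + m' ≤ a * m' := by
      calc b * m' + m' = (b + 1) * m' := by ring
      _ ≤ a * m' := Nat.mul_le_mul_right _ hl
    omega

lemma step_scalar {m' a b r s : ℕ} (h : a * m' + r + 1 = b * m' + s) (hr : r < m') (hs : s < m') :
    (a = b ∧ r + 1 = s) ∨ (b = a + 1 ∧ r = m' - 1 ∧ s = 0) := by
  by_cases hc : r + 1 < m'
  · exact Or.inl (dec_unique (by omega : a * m' + (r + 1) = b * m' + s) hc hs)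
  · right
    have h2 : (a + 1) * m' + 0 = b * m' + s := by
      have he : (a + 1) * m' = a * m' + m' := by ring
      omega
    obtain ⟨hab, hs0⟩ := dec_unique h2 (by omega) hs
    exact ⟨hab.symm, by omega, hs0.symm⟩

lemma decomp {m' : ℕ} {A' W : Set (ℕ × ℕ)} (hm : 0 < m')
    (hA : ∀ r ∈ A', r.1 < m' ∧ r.2 < m') {q : ℕ × ℕ} (h : q ∈ subst m' A' W) :
    bk m' q ∈ W ∧ lc m' q ∈ A' ∧ q.1 = (bk m' q).1 * m' + (lc m' q).1 ∧
      q.2 = (bk m' q).2 * m' + (lc m' q).2 ∧ (lc m' q).1 < m' ∧ (lc m' q).2 < m' := by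
  obtain ⟨p, hp, r, hr, hq⟩ := h
  obtain ⟨hr1, hr2⟩ := hA r hr
  have e1 : q.1 = p.1 * m' + r.1 := by rw [hq]
  have e2 : q.2 = p.2 * m' + r.2 := by rw [hq]
  have d1 : q.1 / m' = p.1 := by
    rw [e1, show p.1 * m' + r.1 = r.1 + m' * p.1 from by ring,
      Nat.add_mul_div_left _ _ hm, Nat.div_eq_of_lt hr1, Nat.zero_add]
  have d2 : q.2 / m' = p.2 := by
    rw [e2, show p.2 * m' + r.2 = r.2 + m' * p.2 from by ring,
      Nat.add_mul_div_left _ _ hm, Nat.div_eq_of_lt hr2, Nat.zero_add]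
  have m1 : q.1 % m' = r.1 := by
    rw [e1, show p.1 * m' + r.1 = r.1 + p.1 * m' from by ring,
      Nat.add_mul_mod_self_right, Nat.mod_eq_of_lt hr1]
  have m2 : q.2 % m' = r.2 := by
    rw [e2, show p.2 * m' + r.2 = r.2 + p.2 * m' from by ring,
      Nat.add_mul_mod_self_right, Nat.mod_eq_of_lt hr2]
  have hbkp : bk m' q = p := Prod.ext d1 d2
  have hlcr : lc m' q = r := Prod.ext m1 m2
  rw [hbkp, hlcr]
  exact ⟨hp, hr, e1, e2, hr1, hr2⟩

lemma vstep {m' : ℕ} {A' W : Set (ℕ × ℕ)} (hm : 0 < m')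
    (hA : ∀ r ∈ A', r.1 < m' ∧ r.2 < m') {w u : ℕ × ℕ}
    (hw : w ∈ subst m' A' W) (hu : u ∈ subst m' A' W)
    (h1 : u.1 = w.1) (h2 : u.2 = w.2 + 1) :
    ((bk m' u) = (bk m' w) ∧ (lc m' u).1 = (lc m' w).1 ∧ (lc m' u).2 = (lc m' w).2 + 1) ∨
    ((bk m' u).1 = (bk m' w).1 ∧ (bk m' u).2 = (bk m' w).2 + 1 ∧
      (lc m' w).2 = m' - 1 ∧ (lc m' u).2 = 0 ∧ (lc m' u).1 = (lc m' w).1) := by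
  obtain ⟨hwW, hwA, hw1, hw2, hwr1, hwr2⟩ := decomp hm hA hw
  obtain ⟨huW, huA, hu1, hu2, hur1, hur2⟩ := decomp hm hA hu
  have e1 : (bk m' u).1 * m' + (lc m' u).1 = (bk m' w).1 * m' + (lc m' w).1 := by omega
  obtain ⟨hb1, hl1⟩ := dec_unique e1 hur1 hwr1
  have e2 : (bk m' w).2 * m' + (lc m' w).2 + 1 = (bk m' u).2 * m' + (lc m' u).2 := by omega
  rcases step_scalar e2 hwr2 hur2 with ⟨hbb, hll⟩ | ⟨hbb, hll, hll2⟩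
  · left
    refine ⟨Prod.ext hb1 hbb.symm, hl1, by omega⟩
  · right
    exact ⟨hb1, hbb, hll, hll2, hl1⟩

lemma hstep {m' : ℕ} {A' W : Set (ℕ × ℕ)} (hm : 0 < m')
    (hA : ∀ r ∈ A', r.1 < m' ∧ r.2 < m') {w u : ℕ × ℕ}
    (hw : w ∈ subst m' A' W) (hu : u ∈ subst m' A' W)
    (h1 : u.2 = w.2) (h2 : u.1 = w.1 + 1) :
    ((bk m' u) = (bk m' w) ∧ (lc m' u).2 = (lc m' w).2 ∧ (lc m' u).1 = (lc m' w).1 + 1) ∨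
    ((bk m' u).2 = (bk m' w).2 ∧ (bk m' u).1 = (bk m' w).1 + 1 ∧
      (lc m' w).1 = m' - 1 ∧ (lc m' u).1 = 0 ∧ (lc m' u).2 = (lc m' w).2) := by
  obtain ⟨hwW, hwA, hw1, hw2, hwr1, hwr2⟩ := decomp hm hA hw
  obtain ⟨huW, huA, hu1, hu2, hur1, hur2⟩ := decomp hm hA hu
  have e1 : (bk m' u).2 * m' + (lc m' u).2 = (bk m' w).2 * m' + (lc m' w).2 := by omega
  obtain ⟨hb1, hl1⟩ := dec_unique e1 hur2 hwr2
  have e2 : (bk m' w).1 * m' + (lc m' w).1 + 1 = (bk m' u).1 * m' + (lc m' u).1 := by omega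
  rcases step_scalar e2 hwr1 hur1 with ⟨hbb, hll⟩ | ⟨hbb, hll, hll2⟩
  · left
    refine ⟨Prod.ext hbb.symm hb1, hl1, by omega⟩
  · right
    exact ⟨hb1, hbb, hll, hll2, hl1⟩
lemma sideAdj_irrefl' {p : ℕ × ℕ} (h : SideAdj p p) : False := by
  unfold SideAdj at h; omega

lemma leafy_subst (m' : ℕ) (hm3 : 3 ≤ m') (A' : Set (ℕ × ℕ))
    (hA : ∀ r ∈ A', r.1 < m' ∧ r.2 < m')
    (hac : (patternGraph A').IsAcyclic)
    (hvert : ∃! i : ℕ, (i, m' - 1) ∈ A' ∧ (i, 0) ∈ A')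
    (hhor : ∃! j : ℕ, (0, j) ∈ A' ∧ (m' - 1, j) ∈ A')
    (W : Set (ℕ × ℕ)) (hW : Leafy W) : Leafy (subst m' A' W) := by
  classical
  intro S hSsub hSne
  have hm : 0 < m' := by omega
  have hdec : ∀ q ∈ S, bk m' q ∈ W ∧ lc m' q ∈ A' ∧ q.1 = (bk m' q).1 * m' + (lc m' q).1 ∧
      q.2 = (bk m' q).2 * m' + (lc m' q).2 ∧ (lc m' q).1 < m' ∧ (lc m' q).2 < m' :=
    fun q hq => decomp hm hA (hSsub hq)
  set Sb : Finset (ℕ × ℕ) := S.image (bk m') with hSb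
  have hSbsub : ↑Sb ⊆ W := by
    intro x hx
    simp only [hSb, Finset.coe_image, Set.mem_image, Finset.mem_coe] at hx
    obtain ⟨q, hq, rfl⟩ := hx
    exact (hdec q hq).1
  obtain ⟨pb, hpbSb, hpbleaf⟩ := hW Sb hSbsub (hSne.image _)
  set Sp : Finset (ℕ × ℕ) := S.filter (fun q => bk m' q = pb) with hSp
  have hSpS : ∀ q ∈ Sp, q ∈ S := fun q hq => (Finset.mem_filter.mp hq).1
  have hSpbk : ∀ q ∈ Sp, bk m' q = pb := fun q hq => (Finset.mem_filter.mp hq).2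
  have hSpne : Sp.Nonempty := by
    rw [hSb] at hpbSb
    obtain ⟨q, hq, hbkq⟩ := Finset.mem_image.mp hpbSb
    exact ⟨q, Finset.mem_filter.mpr ⟨hq, hbkq⟩⟩
  have hinj : ∀ q1 ∈ Sp, ∀ q2 ∈ Sp, lc m' q1 = lc m' q2 → q1 = q2 := by
    intro q1 h1 q2 h2 hl
    obtain ⟨_, _, e11, e12, _, _⟩ := hdec q1 (hSpS q1 h1)
    obtain ⟨_, _, e21, e22, _, _⟩ := hdec q2 (hSpS q2 h2)
    have hb1 := hSpbk q1 h1
    have hb2 := hSpbk q2 h2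
    apply Prod.ext
    · rw [e11, e21, hb1, hb2, hl]
    · rw [e12, e22, hb1, hb2, hl]
  -- cross-direction analysis for an external neighbour
  have cross : ∀ w ∈ Sp, ∀ u ∈ S, SideAdj w u → bk m' u ≠ pb →
      (u.1 = w.1 ∧ u.2 = w.2 + 1 ∧ (bk m' u).1 = pb.1 ∧ (bk m' u).2 = pb.2 + 1 ∧
        (lc m' w).2 = m' - 1 ∧ (lc m' u).2 = 0 ∧ (lc m' u).1 = (lc m' w).1) ∨
      (u.1 = w.1 ∧ w.2 = u.2 + 1 ∧ (bk m' u).1 = pb.1 ∧ (bk m' u).2 + 1 = pb.2 ∧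
        (lc m' w).2 = 0 ∧ (lc m' u).2 = m' - 1 ∧ (lc m' u).1 = (lc m' w).1) ∨
      (u.2 = w.2 ∧ u.1 = w.1 + 1 ∧ (bk m' u).2 = pb.2 ∧ (bk m' u).1 = pb.1 + 1 ∧
        (lc m' w).1 = m' - 1 ∧ (lc m' u).1 = 0 ∧ (lc m' u).2 = (lc m' w).2) ∨
      (u.2 = w.2 ∧ w.1 = u.1 + 1 ∧ (bk m' u).2 = pb.2 ∧ (bk m' u).1 + 1 = pb.1 ∧
        (lc m' w).1 = 0 ∧ (lc m' u).1 = m' - 1 ∧ (lc m' u).2 = (lc m' w).2) := by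
    intro w hwSp u huS hadj hbkne
    have hwS := hSpS w hwSp
    have hbkw := hSpbk w hwSp
    have hwsub : w ∈ subst m' A' W := hSsub hwS
    have husub : u ∈ subst m' A' W := hSsub huS
    rcases hadj with ⟨h1, h2 | h2⟩ | ⟨h1, h2 | h2⟩
    · -- u above w
      rcases vstep hm hA hwsub husub h1.symm h2.symm with ⟨hb, _, _⟩ | ⟨hb1, hb2, hl1, hl2, hl3⟩
      · exact absurd (hb.trans hbkw) hbkne
      · exact Or.inl ⟨h1.symm, h2.symm, by rw [← hbkw]; exact hb1, by rw [← hbkw]; exact hb2,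
          hl1, hl2, hl3⟩
    · -- u below w
      rcases vstep hm hA husub hwsub h1 h2.symm with ⟨hb, _, _⟩ | ⟨hb1, hb2, hl1, hl2, hl3⟩
      · exact absurd (hb.symm.trans hbkw) hbkne
      · exact Or.inr (Or.inl ⟨h1.symm, h2.symm, by rw [← hbkw, hb1], by rw [← hbkw, ← hb2],
          hl2, hl1, hl3.symm⟩)
    · -- u right of w
      rcases hstep hm hA hwsub husub h1.symm h2.symm with ⟨hb, _, _⟩ | ⟨hb1, hb2, hl1, hl2, hl3⟩
      · exact absurd (hb.trans hbkw) hbkne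
      · exact Or.inr (Or.inr (Or.inl ⟨h1.symm, h2.symm, by rw [← hbkw]; exact hb1,
          by rw [← hbkw]; exact hb2, hl1, hl2, hl3⟩))
    · -- u left of w
      rcases hstep hm hA husub hwsub h1 h2.symm with ⟨hb, _, _⟩ | ⟨hb1, hb2, hl1, hl2, hl3⟩
      · exact absurd (hb.symm.trans hbkw) hbkne
      · exact Or.inr (Or.inr (Or.inr ⟨h1.symm, h2.symm, by rw [← hbkw, hb1],
          by rw [← hbkw, ← hb2], hl2, hl1, hl3.symm⟩))
  have hbkSb : ∀ u ∈ S, bk m' u ∈ Sb := fun u hu => by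
    rw [hSb]; exact Finset.mem_image_of_mem _ hu
  -- Claim B
  have claimB : ∀ w1 ∈ Sp, ∀ w2 ∈ Sp, ∀ u1 ∈ S, ∀ u2 ∈ S, SideAdj w1 u1 → SideAdj w2 u2 →
      bk m' u1 ≠ pb → bk m' u2 ≠ pb → w1 = w2 ∧ u1 = u2 := by
    intro w1 hw1 w2 hw2 u1 hu1 u2 hu2 ha1 ha2 hb1 hb2
    have hc1 := cross w1 hw1 u1 hu1 ha1 hb1
    have hc2 := cross w2 hw2 u2 hu2 ha2 hb2
    have hlcw1A : lc m' w1 ∈ A' := (hdec w1 (hSpS w1 hw1)).2.1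
    have hlcw2A : lc m' w2 ∈ A' := (hdec w2 (hSpS w2 hw2)).2.1
    have hlcu1A : lc m' u1 ∈ A' := (hdec u1 hu1).2.1
    have hlcu2A : lc m' u2 ∈ A' := (hdec u2 hu2).2.1
    have hmemSb1 : (bk m' u1) ∈ (↑Sb : Set (ℕ × ℕ)) := hbkSb u1 hu1
    have hmemSb2 : (bk m' u2) ∈ (↑Sb : Set (ℕ × ℕ)) := hbkSb u2 hu2
    obtain ⟨i0, _, hiu⟩ := hvert
    obtain ⟨j0, _, hju⟩ := hhor
    rcases hc1 with ⟨g1, g2, b1, b2, lw, lu2, lu1⟩ | ⟨g1, g2, b1, b2, lw, lu2, lu1⟩ |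
        ⟨g1, g2, b1, b2, lw, lu2, lu1⟩ | ⟨g1, g2, b1, b2, lw, lu2, lu1⟩ <;>
      rcases hc2 with ⟨g1', g2', b1', b2', lw', lu2', lu1'⟩ | ⟨g1', g2', b1', b2', lw', lu2', lu1'⟩ |
        ⟨g1', g2', b1', b2', lw', lu2', lu1'⟩ | ⟨g1', g2', b1', b2', lw', lu2', lu1'⟩ <;>
      (have hSadj1 : SideAdj pb (bk m' u1) := by unfold SideAdj; omega
       have hSadj2 : SideAdj pb (bk m' u2) := by unfold SideAdj; omega
       have heq := hpbleaf (bk m' u1) hmemSb1 (bk m' u2) hmemSb2 hSadj1 hSadj2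
       have heq1 := congrArg Prod.fst heq
       have heq2 := congrArg Prod.snd heq
       first
       | (exfalso; omega)
       | (have hcu : (lc m' w1).1 = i0 := by
            refine hiu _ ⟨?_, ?_⟩
            · first
              | (rw [show ((lc m' w1).1, m' - 1) = lc m' w1 from Prod.ext rfl (by omega)]
                 exact hlcw1A)
              | (rw [show ((lc m' w1).1, m' - 1) = lc m' u1 from Prod.ext (by omega) (by omega)]
                 exact hlcu1A)
            · first
              | (rw [show ((lc m' w1).1, 0) = lc m' w1 from Prod.ext rfl (by omega)]
                 exact hlcw1A)
              | (rw [show ((lc m' w1).1, 0) = lc m' u1 from Prod.ext (by omega) (by omega)]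
                 exact hlcu1A)
          have hcu' : (lc m' w2).1 = i0 := by
            refine hiu _ ⟨?_, ?_⟩
            · first
              | (rw [show ((lc m' w2).1, m' - 1) = lc m' w2 from Prod.ext rfl (by omega)]
                 exact hlcw2A)
              | (rw [show ((lc m' w2).1, m' - 1) = lc m' u2 from Prod.ext (by omega) (by omega)]
                 exact hlcu2A)
            · first
              | (rw [show ((lc m' w2).1, 0) = lc m' w2 from Prod.ext rfl (by omega)]
                 exact hlcw2A)
              | (rw [show ((lc m' w2).1, 0) = lc m' u2 from Prod.ext (by omega) (by omega)]
                 exact hlcu2A)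
          have hw12 : w1 = w2 := hinj w1 hw1 w2 hw2 (Prod.ext (by omega) (by omega))
          have hwf := congrArg Prod.fst hw12
          have hws := congrArg Prod.snd hw12
          exact ⟨hw12, Prod.ext (by omega) (by omega)⟩)
       | (have hcu : (lc m' w1).2 = j0 := by
            refine hju _ ⟨?_, ?_⟩
            · first
              | (rw [show ((0 : ℕ), (lc m' w1).2) = lc m' w1 from Prod.ext (by omega) rfl]
                 exact hlcw1A)
              | (rw [show ((0 : ℕ), (lc m' w1).2) = lc m' u1 from Prod.ext (by omega) (by omega)]
                 exact hlcu1A)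
            · first
              | (rw [show ((m' - 1 : ℕ), (lc m' w1).2) = lc m' w1 from Prod.ext (by omega) rfl]
                 exact hlcw1A)
              | (rw [show ((m' - 1 : ℕ), (lc m' w1).2) = lc m' u1 from Prod.ext (by omega) (by omega)]
                 exact hlcu1A)
          have hcu' : (lc m' w2).2 = j0 := by
            refine hju _ ⟨?_, ?_⟩
            · first
              | (rw [show ((0 : ℕ), (lc m' w2).2) = lc m' w2 from Prod.ext (by omega) rfl]
                 exact hlcw2A)
              | (rw [show ((0 : ℕ), (lc m' w2).2) = lc m' u2 from Prod.ext (by omega) (by omega)]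
                 exact hlcu2A)
            · first
              | (rw [show ((m' - 1 : ℕ), (lc m' w2).2) = lc m' w2 from Prod.ext (by omega) rfl]
                 exact hlcw2A)
              | (rw [show ((m' - 1 : ℕ), (lc m' w2).2) = lc m' u2 from Prod.ext (by omega) (by omega)]
                 exact hlcu2A)
          have hw12 : w1 = w2 := hinj w1 hw1 w2 hw2 (Prod.ext (by omega) (by omega))
          have hwf := congrArg Prod.fst hw12
          have hws := congrArg Prod.snd hw12
          exact ⟨hw12, Prod.ext (by omega) (by omega)⟩))
  -- internal neighbours project to local adjacency
  have internal : ∀ w ∈ Sp, ∀ u ∈ S, SideAdj w u → bk m' u = pb →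
      u ∈ Sp ∧ SideAdj (lc m' w) (lc m' u) := by
    intro w hwSp u huS hadj hbku
    have hwS := hSpS w hwSp
    have hbkw := hSpbk w hwSp
    have hwsub : w ∈ subst m' A' W := hSsub hwS
    have husub : u ∈ subst m' A' W := hSsub huS
    refine ⟨Finset.mem_filter.mpr ⟨huS, hbku⟩, ?_⟩
    have hbkeq : bk m' u = bk m' w := by rw [hbku, hbkw]
    have hb1 := congrArg Prod.fst hbkeq
    have hb2 := congrArg Prod.snd hbkeq
    rcases hadj with ⟨h1, h2 | h2⟩ | ⟨h1, h2 | h2⟩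
    · rcases vstep hm hA hwsub husub h1.symm h2.symm with ⟨_, hl1, hl2⟩ | ⟨_, hbb, _, _, _⟩
      · unfold SideAdj; omega
      · exfalso; omega
    · rcases vstep hm hA husub hwsub h1 h2.symm with ⟨_, hl1, hl2⟩ | ⟨_, hbb, _, _, _⟩
      · unfold SideAdj; omega
      · exfalso; omega
    · rcases hstep hm hA hwsub husub h1.symm h2.symm with ⟨_, hl1, hl2⟩ | ⟨_, hbb, _, _, _⟩
      · unfold SideAdj; omega
      · exfalso; omega
    · rcases hstep hm hA husub hwsub h1 h2.symm with ⟨_, hl1, hl2⟩ | ⟨_, hbb, _, _, _⟩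
      · unfold SideAdj; omega
      · exfalso; omega
  set T : Finset (ℕ × ℕ) := Sp.image (lc m') with hT
  have hTA : ↑T ⊆ A' := by
    intro x hx
    simp only [hT, Finset.coe_image, Set.mem_image, Finset.mem_coe] at hx
    obtain ⟨q, hq, rfl⟩ := hx
    exact (hdec q (hSpS q hq)).2.1
  have hTne : T.Nonempty := hSpne.image _
  have hTcard : T.card = Sp.card := Finset.card_image_of_injOn (fun q1 h1 q2 h2 hl =>
    hinj q1 (Finset.mem_coe.mp h1) q2 (Finset.mem_coe.mp h2) hl)
  -- the leaf argument for a cell with no external neighbours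
  have mkleaf : ∀ c ∈ Sp, leafIn ↑T (lc m' c) →
      (∀ z ∈ S, SideAdj c z → bk m' z = pb) → leafIn ↑S c := by
    intro c hcSp hlf hnoext u hu v hv hadju hadjv
    have huS : u ∈ S := hu
    have hvS : v ∈ S := hv
    obtain ⟨huSp, hlu⟩ := internal c hcSp u huS hadju (hnoext u huS hadju)
    obtain ⟨hvSp, hlv⟩ := internal c hcSp v hvS hadjv (hnoext v hvS hadjv)
    have h1 : lc m' u ∈ (↑T : Set (ℕ × ℕ)) := by
      rw [hT]; exact Finset.mem_coe.mpr (Finset.mem_image_of_mem _ huSp)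
    have h2 : lc m' v ∈ (↑T : Set (ℕ × ℕ)) := by
      rw [hT]; exact Finset.mem_coe.mpr (Finset.mem_image_of_mem _ hvSp)
    exact hinj u huSp v hvSp (hlf (lc m' u) h1 (lc m' v) h2 hlu hlv)
  by_cases hdoor : ∃ w0, w0 ∈ Sp ∧ ∃ u0, u0 ∈ S ∧ SideAdj w0 u0 ∧ bk m' u0 ≠ pb
  · obtain ⟨w0, hw0, u0, hu0, hadj0, hbk0⟩ := hdoor
    by_cases hc2 : 2 ≤ Sp.card
    · obtain ⟨t1, ht1T, ht1leaf, hsecond⟩ := leaves A' hac T hTA hTne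
      obtain ⟨t2, ht2T, ht2ne, ht2leaf⟩ := hsecond (by omega)
      obtain ⟨t, htT, htleaf, htne⟩ : ∃ t, t ∈ T ∧ leafIn ↑T t ∧ t ≠ lc m' w0 := by
        by_cases h : t1 = lc m' w0
        · exact ⟨t2, ht2T, ht2leaf, by rw [← h]; exact ht2ne⟩
        · exact ⟨t1, ht1T, ht1leaf, h⟩
      obtain ⟨c, hcSp, hlcc⟩ := Finset.mem_image.mp (by rw [hT] at htT; exact htT)
      have hcw0 : c ≠ w0 := fun h => htne (by rw [← hlcc, h])
      refine ⟨c, hSpS c hcSp, ?_⟩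
      refine mkleaf c hcSp (by rw [hlcc]; exact htleaf) ?_
      intro z hz hadjz
      by_contra hzb
      exact hcw0 (claimB c hcSp w0 hw0 z hz u0 hu0 hadjz hadj0 hzb hbk0).1
    · -- Sp is a singleton {w0}
      have hsing : ∀ z ∈ Sp, z = w0 := by
        intro z hz
        exact Finset.card_le_one.mp (by omega) z hz w0 hw0
      refine ⟨w0, hSpS w0 hw0, ?_⟩
      intro u hu v hv hadju hadjv
      have huS : u ∈ S := hu
      have hvS : v ∈ S := hv
      have hubk : bk m' u ≠ pb := by
        intro hbku
        obtain ⟨huSp, _⟩ := internal w0 hw0 u huS hadju hbku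
        have := hsing u huSp
        subst this
        exact sideAdj_irrefl' hadju
      have hvbk : bk m' v ≠ pb := by
        intro hbkv
        obtain ⟨hvSp, _⟩ := internal w0 hw0 v hvS hadjv hbkv
        have := hsing v hvSp
        subst this
        exact sideAdj_irrefl' hadjv
      exact (claimB w0 hw0 w0 hw0 u huS v hvS hadju hadjv hubk hvbk).2
  · push_neg at hdoor
    have hnoext : ∀ w ∈ Sp, ∀ z ∈ S, SideAdj w z → bk m' z = pb := by
      intro w hw z hz hadjz
      exact hdoor w hw z hz hadjz
    obtain ⟨t, htT, htleaf, _⟩ := leaves A' hac T hTA hTne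
    obtain ⟨c, hcSp, hlcc⟩ := Finset.mem_image.mp (by rw [hT] at htT; exact htT)
    exact ⟨c, hSpS c hcSp, mkleaf c hcSp (by rw [hlcc]; exact htleaf)
      (fun z hz hadjz => hnoext c hcSp z hz hadjz)⟩


lemma whites_bounds (m : ℕ → ℕ) (A : ℕ → Set (ℕ × ℕ))
    (hlab : ∀ k, IsLabyrinthPattern (m k) (A k)) :
    ∀ n, ∀ q ∈ whites m A n, q.1 < mProd m n ∧ q.2 < mProd m n := by
  intro n
  induction n with
  | zero =>
    intro q hq
    have : q = (0, 0) := hq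
    subst this
    simp [mProd]
  | succ n ih =>
    intro q hq
    obtain ⟨p, hp, r, hr, rfl⟩ := hq
    obtain ⟨hp1, hp2⟩ := ih p hp
    obtain ⟨hr1, hr2⟩ := ((hlab n).2.1).2 r hr
    have hMn : mProd m (n + 1) = mProd m n * m n := Finset.prod_range_succ m n
    constructor
    · show p.1 * m n + r.1 < mProd m (n + 1)
      have h1 : (p.1 + 1) * m n ≤ mProd m n * m n := Nat.mul_le_mul_right _ hp1
      have h2 : (p.1 + 1) * m n = p.1 * m n + m n := by ring
      omega
    · show p.2 * m n + r.2 < mProd m (n + 1)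
      have h1 : (p.2 + 1) * m n ≤ mProd m n * m n := Nat.mul_le_mul_right _ hp2
      have h2 : (p.2 + 1) * m n = p.2 * m n + m n := by ring
      omega

lemma whites_leafy (m : ℕ → ℕ) (A : ℕ → Set (ℕ × ℕ))
    (hlab : ∀ k, IsLabyrinthPattern (m k) (A k)) :
    ∀ n, Leafy (whites m A n) := by
  intro n
  induction n with
  | zero =>
    intro S hSsub hSne
    obtain ⟨s, hs⟩ := hSne
    refine ⟨s, hs, ?_⟩
    intro u hu v hv _ _
    have h1 : u = (0, 0) := hSsub hu
    have h2 : v = (0, 0) := hSsub hv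
    rw [h1, h2]
  | succ n ih =>
    obtain ⟨hm3, hpat, htree, hvert, hhor, _⟩ := hlab n
    exact leafy_subst (m n) hm3 (A n) hpat.2 htree.IsAcyclic hvert hhor _ ih

lemma walk_mem (M : ℕ) (W : Set (ℕ × ℕ)) :
    ∀ {p b : ℕ × ℕ} (w : (BG M W).Walk p b), inGrid M p → p ∉ W →
      ∀ x ∈ w.support, inGrid M x ∧ x ∉ W := by
  intro p b w
  induction w with
  | nil =>
    intro h1 h2 x hx
    simp at hx
    subst hx
    exact ⟨h1, h2⟩
  | cons h w ih =>
    intro h1 h2 x hx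
    rw [SimpleGraph.Walk.support_cons] at hx
    rcases List.mem_cons.mp hx with rfl | hx'
    · exact ⟨h1, h2⟩
    · exact ih h.2.2.1 h.2.2.2.2 x hx'

lemma reach_to_path (M : ℕ) (W : Set (ℕ × ℕ)) (p b : ℕ × ℕ)
    (hp : inGrid M p) (hpW : p ∉ W) (h : (BG M W).Reachable p b) :
    ∃ l, IsPathIn CornerAdj ({x : ℕ × ℕ | x.1 < M ∧ x.2 < M} \ W) l p b := by
  obtain ⟨w⟩ := h
  refine ⟨w.bypass.support, SimpleGraph.Walk.support_ne_nil _,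
    (SimpleGraph.Walk.isPath_def _).mp w.bypass_isPath, ?_, ?_, ?_, ?_⟩
  · exact (SimpleGraph.Walk.isChain_adj_support _).imp (fun a b h => h.1)
  · intro x hx
    obtain ⟨⟨hg1, hg2⟩, hnW⟩ := walk_mem M W w.bypass hp hpW x hx
    exact ⟨⟨hg1, hg2⟩, hnW⟩
  · rw [SimpleGraph.Walk.support_eq_cons]
    rfl
  · rw [List.getLast?_eq_getLast_of_ne_nil (SimpleGraph.Walk.support_ne_nil _)]
    congr 1
    exact SimpleGraph.Walk.getLast_support _


end Labyrinth
open Labyrinth in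
/-- From every black square of level `n` there is a path in `𝒢(ℬ_n)`
(black squares, adjacency: common side or corner) to a black border square of level `n`. -/
theorem black_path_to_border (m : ℕ → ℕ) (A : ℕ → Set (ℕ × ℕ))
    (hlab : ∀ k, IsLabyrinthPattern (m k) (A k)) (n : ℕ) (hn : 1 ≤ n) :
    ∀ p ∈ blacks m A n, ∃ b ∈ blacks m A n, IsBorder (mProd m n) b ∧
      ∃ l, IsPathIn CornerAdj (blacks m A n) l p b := by
  intro p hp
  obtain ⟨⟨hp1, hp2⟩, hpW⟩ := hp
  set M := mProd m n with hM
  have hsubgrid : whites m A n ⊆ ↑(Finset.range M ×ˢ Finset.range M) := by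
    intro q hq
    obtain ⟨h1, h2⟩ := whites_bounds m A hlab n q hq
    simp [Finset.mem_product, Finset.mem_range]
    exact ⟨h1, h2⟩
  have hfin : (whites m A n).Finite :=
    Set.Finite.subset (Finset.range M ×ˢ Finset.range M).finite_toSet hsubgrid
  set WF : Finset (ℕ × ℕ) := hfin.toFinset with hWF
  have hcoe : ↑WF = whites m A n := hfin.coe_toFinset
  have hleafy : Leafy ↑WF := by rw [hcoe]; exact whites_leafy m A hlab n
  have hpWF : p ∉ WF := by
    rw [← Finset.mem_coe, hcoe]
    exact hpW
  obtain ⟨b, hbg, hbW, hbB, hreach⟩ := escape M WF.card WF le_rfl hleafy p ⟨hp1, hp2⟩ hpWF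
  have hbW' : b ∉ whites m A n := by
    rw [← hcoe]
    exact fun hh => hbW (Finset.mem_coe.mp hh)
  obtain ⟨l, hl⟩ := reach_to_path M ↑WF p b ⟨hp1, hp2⟩ (by rw [hcoe]; exact hpW) hreach
  refine ⟨b, ⟨⟨hbg.1, hbg.2⟩, hbW'⟩, hbB, l, ?_⟩
  have hseteq : {x : ℕ × ℕ | x.1 < M ∧ x.2 < M} \ ↑WF = blacks m A n := by
    rw [hcoe]
    rfl
  rw [← hseteq]
  exact hl
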